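/- arXiv:1911.07826 — 6 statements merged into one kernel-verified Lean document; each statement's English description precedes it below -/
import Mathlib

section
/- Let X be a real Banach space, Y a closed subspace of X, and Z a weak*-closed subspace of X* that is norm-attaining for Y. Then: (1) Y ∩ Z^⊤ = {0}; (2) ‖y‖ ≤ ‖y + z‖ for all y ∈ Y and all z ∈ Z^⊤; (3) Y + Z^⊤ is a closed subspace of X. -/
/-- A subspace `Z` of the dual of `X` is **weak*-closed** if its image in `WeakDual ℝ X`
is closed in the weak-* topology. -/
def WeakStarClosed {X : Type*} [NormedAddCommGroup X] [NormedSpace ℝ X]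
    (Z : Submodule ℝ (X →L[ℝ] ℝ)) : Prop :=
  IsClosed (StrongDual.toWeakDual '' (Z : Set (X →L[ℝ] ℝ)) : Set (WeakDual ℝ X))

/-- `Z ⊆ X*` is **norm-attaining for** the subspace `Y ⊆ X` if every norm-one element of `Y`
is sent to `1` by some norm-one functional in `Z`. -/
def NormAttainingFor {X : Type*} [NormedAddCommGroup X] [NormedSpace ℝ X]
    (Y : Submodule ℝ X) (Z : Submodule ℝ (X →L[ℝ] ℝ)) : Prop :=
  ∀ y ∈ Y, ‖y‖ = 1 → ∃ f ∈ Z, ‖f‖ = 1 ∧ f y = 1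

/-- The **pre-annihilator** `Z^⊤` of a subspace `Z` of the dual of `X`. -/
def preAnn {X : Type*} [NormedAddCommGroup X] [NormedSpace ℝ X]
    (Z : Submodule ℝ (X →L[ℝ] ℝ)) : Submodule ℝ X where
  carrier := {x | ∀ f ∈ Z, f x = 0}
  add_mem' := by intro a b ha hb f hf; simp [ha f hf, hb f hf]
  zero_mem' := by intro f hf; simp
  smul_mem' := by intro c x hx f hf; simp [hx f hf]

/-- If `Z` is a weak*-closed subspace of `X*` which is norm-attaining for a closed subspace
`Y` of `X`, then `Y ∩ Z^⊤ = {0}`, `‖y‖ ≤ ‖y + z‖` for all `y ∈ Y`, `z ∈ Z^⊤`, and `Y + Z^⊤`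
is closed in `X`. -/
theorem normAttainingFor_props (X : Type*) [NormedAddCommGroup X] [NormedSpace ℝ X]
    [CompleteSpace X] (Y : Submodule ℝ X) (hY : IsClosed (Y : Set X))
    (Z : Submodule ℝ (X →L[ℝ] ℝ)) (hZw : WeakStarClosed Z) (hZ : NormAttainingFor Y Z) :
    Y ⊓ preAnn Z = ⊥ ∧
    (∀ y ∈ Y, ∀ z ∈ preAnn Z, ‖y‖ ≤ ‖y + z‖) ∧
    IsClosed ((Y ⊔ preAnn Z : Submodule ℝ X) : Set X) := by
  have key : ∀ y ∈ Y, ∀ z ∈ preAnn Z, ‖y‖ ≤ ‖y + z‖ := by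
    intro y hy z hz
    rcases eq_or_ne y 0 with rfl | hy0
    · simp
    · have hny : ‖y‖ ≠ 0 := norm_ne_zero_iff.mpr hy0
      obtain ⟨f, hfZ, hf1, hfy⟩ := hZ (‖y‖⁻¹ • y) (Y.smul_mem _ hy)
        (by rw [norm_smul, norm_inv, norm_norm, inv_mul_cancel₀ hny])
      have hfy' : f y = ‖y‖ := by
        have : ‖y‖⁻¹ * f y = 1 := by simpa using hfy
        field_simp at this
        linarith
      calc ‖y‖ = f y := hfy'.symm
        _ = f (y + z) := by rw [map_add, hz f hfZ, add_zero]
        _ ≤ ‖f (y + z)‖ := le_abs_self _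
        _ ≤ ‖f‖ * ‖y + z‖ := f.le_opNorm _
        _ = ‖y + z‖ := by rw [hf1, one_mul]
  refine ⟨?_, key, ?_⟩
  · ext x
    simp only [Submodule.mem_inf, Submodule.mem_bot]
    constructor
    · rintro ⟨hxY, hxZ⟩
      have := key x hxY (-x) ((preAnn Z).neg_mem hxZ)
      simp only [add_neg_cancel, norm_zero] at this
      exact norm_le_zero_iff.mp this
    · rintro rfl; exact ⟨Y.zero_mem, (preAnn Z).zero_mem⟩
  · apply IsSeqClosed.isClosed
    intro u x hu hx
    choose y hy z hz huv using fun n => Submodule.mem_sup.mp (hu n)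
    have hucauchy : CauchySeq u := hx.cauchySeq
    have hycauchy : CauchySeq y := by
      rw [Metric.cauchySeq_iff] at hucauchy ⊢
      intro ε hε
      obtain ⟨N, hN⟩ := hucauchy ε hε
      refine ⟨N, fun m hm n hn => lt_of_le_of_lt ?_ (hN m hm n hn)⟩
      rw [dist_eq_norm, dist_eq_norm]
      calc ‖y m - y n‖ ≤ ‖(y m - y n) + (z m - z n)‖ :=
            key _ (Y.sub_mem (hy m) (hy n)) _ ((preAnn Z).sub_mem (hz m) (hz n))
        _ = ‖u m - u n‖ := by rw [← huv m, ← huv n]; congr 1; abel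
    obtain ⟨l, hl⟩ := cauchySeq_tendsto_of_complete hycauchy
    have hlY : l ∈ Y := hY.mem_of_tendsto hl (Filter.Eventually.of_forall hy)
    have hzl : Filter.Tendsto z Filter.atTop (nhds (x - l)) := by
      have : z = fun n => u n - y n := by
        funext n; rw [← huv n]; abel
      rw [this]
      exact hx.sub hl
    have hxl : x - l ∈ preAnn Z := by
      intro f hf
      have h1 : Filter.Tendsto (fun n => f (z n)) Filter.atTop (nhds (f (x - l))) :=
        (f.continuous.tendsto _).comp hzl
      have h2 : (fun n => f (z n)) = fun _ => (0 : ℝ) := by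
        funext n; exact hz n f hf
      rw [h2] at h1
      exact (tendsto_nhds_unique tendsto_const_nhds h1).symm
    exact Submodule.mem_sup.mpr ⟨l, hlY, x - l, hxl, by abel⟩
end

section
/- Let X be a real Banach space, Y a closed subspace of X, and Z a weak*-closed subspace of X* that is norm-attaining for Y. If in addition Y^⊥ ∩ Z = {0}, then Y + Z^⊤ = X. -/
section Aux

variable {X : Type*} [NormedAddCommGroup X] [NormedSpace ℝ X]

/-- Evaluation at a point, as a linear functional on the weak-* dual. -/
noncomputable def evalW (x : X) : WeakDual ℝ X →ₗ[ℝ] ℝ where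
  toFun f := f x
  map_add' f g := rfl
  map_smul' c f := rfl

lemma eq_zero_of_forall_mul_lt {a u : ℝ} (h : ∀ t : ℝ, t * a < u) : a = 0 := by
  by_contra ha
  have := h ((|u| + 1) / a)
  rw [div_mul_cancel₀ _ ha] at this
  have : u ≤ |u| := le_abs_self u
  linarith [h ((|u| + 1) / a), div_mul_cancel₀ (|u| + 1) ha]

/-- Every continuous linear functional on the weak-* dual is evaluation at a point. -/
lemma exists_eval_of_weakDual (φ : WeakDual ℝ X →L[ℝ] ℝ) :
    ∃ x : X, ∀ f : X →L[ℝ] ℝ, φ (StrongDual.toWeakDual f) = f x := by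
  classical
  have hcont : φ ⁻¹' Metric.ball (0 : ℝ) 1 ∈ nhds (0 : WeakDual ℝ X) := by
    have h0 := φ.continuous.tendsto (0 : WeakDual ℝ X)
    rw [map_zero] at h0
    exact h0 (Metric.ball_mem_nhds (0 : ℝ) one_pos)
  obtain ⟨U, hU, hUsub⟩ :=
    ((topDualPairing ℝ X).hasBasis_weakBilin.mem_iff).1 hcont
  obtain ⟨s, r, hr, rfl⟩ := ((topDualPairing ℝ X).toSeminormFamily.basisSets_iff).1 hU
  -- functionals vanishing on `s` are in the kernel of `φ`
  have hker : (⨅ i : s, LinearMap.ker (evalW (i : X))) ≤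
      LinearMap.ker (φ : WeakDual ℝ X →ₗ[ℝ] ℝ) := by
    intro f hf
    have hf0 : ∀ i ∈ s, f i = 0 := by
      intro i hi
      have := Submodule.mem_iInf _ |>.1 hf ⟨i, hi⟩
      exact this
    have hmem : ∀ t : ℝ, t • f ∈ Seminorm.ball
        (s.sup ((topDualPairing ℝ X).toSeminormFamily)) 0 r := by
      intro t
      refine (Seminorm.mem_ball_zero _).mpr ?_
      refine Seminorm.finset_sup_apply_lt hr ?_
      intro i hi
      calc ((topDualPairing ℝ X).toSeminormFamily i) (t • f) = ‖t * f i‖ := rfl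
        _ < r := by rw [hf0 i hi, mul_zero, norm_zero]; exact hr
    have habs : ∀ t : ℝ, t * φ f < 1 := by
      intro t
      have : t • f ∈ φ ⁻¹' Metric.ball (0 : ℝ) 1 := hUsub (hmem t)
      simp only [Set.mem_preimage, Metric.mem_ball, dist_zero_right, map_smul,
        smul_eq_mul] at this
      calc t * φ f ≤ |t * φ f| := le_abs_self _
        _ = |t| * |φ f| := abs_mul _ _
        _ < 1 := by simpa [Real.norm_eq_abs] using this
    exact eq_zero_of_forall_mul_lt habs
  have hspan := mem_span_of_iInf_ker_le_ker (𝕜 := ℝ) hker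
  rw [Submodule.mem_span_range_iff_exists_fun ℝ] at hspan
  obtain ⟨c, hc⟩ := hspan
  refine ⟨∑ i : s, c i • (i : X), fun f => ?_⟩
  have h2 := LinearMap.congr_fun hc (StrongDual.toWeakDual f)
  simp only [LinearMap.coe_sum, Finset.sum_apply, LinearMap.smul_apply,
    smul_eq_mul, ContinuousLinearMap.coe_coe] at h2
  rw [← h2, map_sum]
  refine Finset.sum_congr rfl fun i _ => ?_
  rw [map_smul, smul_eq_mul]
  rfl

/-- Bipolar-type statement: a functional vanishing on the pre-annihilator of a weak*-closed
subspace `Z` belongs to `Z`. -/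
lemma mem_of_vanishes_preAnn (Z : Submodule ℝ (X →L[ℝ] ℝ)) (hZw : WeakStarClosed Z)
    (f : X →L[ℝ] ℝ) (hf : ∀ x ∈ preAnn Z, f x = 0) : f ∈ Z := by
  by_contra hfZ
  haveI : LocallyConvexSpace ℝ (WeakDual ℝ X) := WeakBilin.locallyConvexSpace
  set M : Submodule ℝ (WeakDual ℝ X) :=
    Z.map (StrongDual.toWeakDual : StrongDual ℝ X ≃ₗ[ℝ] WeakDual ℝ X).toLinearMap
    with hM
  have hMS : (M : Set (WeakDual ℝ X)) = StrongDual.toWeakDual '' (Z : Set (X →L[ℝ] ℝ)) :=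
    Submodule.map_coe _ _
  have hMclosed : IsClosed (M : Set (WeakDual ℝ X)) := by rw [hMS]; exact hZw
  have hfM : (StrongDual.toWeakDual f : WeakDual ℝ X) ∉ (M : Set (WeakDual ℝ X)) := by
    rw [hMS]
    rintro ⟨g, hg, hgf⟩
    exact hfZ (by rwa [← StrongDual.toWeakDual.injective hgf])
  obtain ⟨φ, u, h1, h2⟩ :=
    geometric_hahn_banach_closed_point (M.convex) hMclosed hfM
  have hvan : ∀ a ∈ M, φ a = 0 := by
    intro a ha
    refine eq_zero_of_forall_mul_lt (u := u) fun t => ?_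
    have := h1 (t • a) (M.smul_mem t ha)
    simpa [map_smul, smul_eq_mul] using this
  have hu : 0 < u := by simpa using h1 0 M.zero_mem
  obtain ⟨x0, hx0⟩ := exists_eval_of_weakDual φ
  have hx0pre : x0 ∈ preAnn Z := by
    intro g hg
    have : φ (StrongDual.toWeakDual g) = 0 :=
      hvan _ (Submodule.mem_map_of_mem hg)
    rwa [hx0 g] at this
  have : f x0 = 0 := hf x0 hx0pre
  rw [hx0 f, this] at h2
  linarith

end Aux

/-- If `Z` is a weak*-closed subspace of `X*` which is norm-attaining for a closed subspace
`Y` of `X` and moreover `Y^⊥ ∩ Z = {0}`, then `Y + Z^⊤ = X`. -/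
theorem normAttainingFor_sup_preAnn_eq_top (X : Type*) [NormedAddCommGroup X]
    [NormedSpace ℝ X] [CompleteSpace X] (Y : Submodule ℝ X) (hY : IsClosed (Y : Set X))
    (Z : Submodule ℝ (X →L[ℝ] ℝ)) (hZw : WeakStarClosed Z) (hZ : NormAttainingFor Y Z)
    (hYZ : ∀ f ∈ Z, (∀ y ∈ Y, f y = 0) → f = 0) :
    Y ⊔ preAnn Z = ⊤ := by
  classical
  set W : Submodule ℝ X := preAnn Z with hW
  -- the pre-annihilator is closed
  have hWclosed : IsClosed (W : Set X) := by
    have : (W : Set X) = ⋂ f ∈ Z, (f : X → ℝ) ⁻¹' {0} := by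
      ext x
      simp only [Set.mem_iInter, Set.mem_preimage, Set.mem_singleton_iff]
      rfl
    rw [this]
    exact isClosed_biInter fun f _ => isClosed_singleton.preimage f.continuous
  -- key norm estimate coming from norm attainment
  have key : ∀ y ∈ Y, ∀ w ∈ W, ‖y‖ ≤ ‖y + w‖ := by
    intro y hy w hw
    rcases eq_or_ne y 0 with rfl | hy0
    · simpa using norm_nonneg w
    · have hny : (0 : ℝ) < ‖y‖ := norm_pos_iff.2 hy0
      obtain ⟨f, hfZ, hf1, hfy⟩ := hZ (‖y‖⁻¹ • y) (Y.smul_mem _ hy)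
        (by rw [norm_smul, norm_inv, norm_norm, inv_mul_cancel₀ hny.ne'])
      have hfy' : f y = ‖y‖ := by
        have h := hfy
        rw [map_smul, smul_eq_mul] at h
        field_simp at h
        linarith
      have hfw : f w = 0 := hw f hfZ
      calc ‖y‖ = f (y + w) := by rw [map_add, hfw, add_zero, hfy']
        _ ≤ ‖f (y + w)‖ := le_abs_self _
        _ ≤ ‖f‖ * ‖y + w‖ := f.le_opNorm _
        _ = ‖y + w‖ := by rw [hf1, one_mul]
  -- the sum `Y + W` is closed
  have hS : IsClosed ((Y ⊔ W : Submodule ℝ X) : Set X) := by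
    apply IsSeqClosed.isClosed
    intro u x hu hux
    choose y hy w hw huw using fun n => Submodule.mem_sup.1 (hu n)
    have hcau : CauchySeq y := by
      rw [Metric.cauchySeq_iff]
      have hc := hux.cauchySeq
      rw [Metric.cauchySeq_iff] at hc
      intro ε hε
      obtain ⟨N, hN⟩ := hc ε hε
      refine ⟨N, fun m hm n hn => ?_⟩
      have hle : dist (y m) (y n) ≤ dist (u m) (u n) := by
        rw [dist_eq_norm, dist_eq_norm]
        have hsum : (y m - y n) + (w m - w n) = u m - u n := by
          rw [← huw m, ← huw n]; abel
        have := key (y m - y n) (Y.sub_mem (hy m) (hy n))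
          (w m - w n) (W.sub_mem (hw m) (hw n))
        rwa [hsum] at this
      exact lt_of_le_of_lt hle (hN m hm n hn)
    obtain ⟨l, hl⟩ := cauchySeq_tendsto_of_complete hcau
    have hlY : l ∈ Y := hY.mem_of_tendsto hl (Filter.Eventually.of_forall hy)
    have hwt : Filter.Tendsto w Filter.atTop (nhds (x - l)) := by
      have hweq : w = fun n => u n - y n := funext fun n => by
        rw [← huw n]; abel
      rw [hweq]
      exact hux.sub hl
    have hxl : x - l ∈ W := hWclosed.mem_of_tendsto hwt (Filter.Eventually.of_forall hw)
    exact Submodule.mem_sup.2 ⟨l, hlY, x - l, hxl, by abel⟩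
  -- separation argument
  by_contra hne
  obtain ⟨x, hx⟩ : ∃ x : X, x ∉ (Y ⊔ W : Submodule ℝ X) := by
    by_contra h
    push_neg at h
    exact hne (eq_top_iff.2 fun v _ => h v)
  obtain ⟨φ, u, h1, h2⟩ := geometric_hahn_banach_closed_point ((Y ⊔ W).convex) hS hx
  have hvan : ∀ v ∈ Y ⊔ W, φ v = 0 := by
    intro v hv
    refine eq_zero_of_forall_mul_lt (u := u) fun t => ?_
    have := h1 (t • v) ((Y ⊔ W).smul_mem t hv)
    simpa [map_smul, smul_eq_mul] using this
  have hu : 0 < u := by simpa using h1 0 (Y ⊔ W).zero_mem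
  have hφZ : φ ∈ Z := mem_of_vanishes_preAnn Z hZw φ
    (fun a ha => hvan a (Submodule.mem_sup_right ha))
  have hφ0 : φ = 0 := hYZ φ hφZ fun v hv => hvan v (Submodule.mem_sup_left hv)
  rw [hφ0] at h2
  simp at h2
  linarith
end

section
/- Let X be a real Banach space and Y a closed subspace of X. Suppose there exists a closed subspace V ≠ {0} of X with Y ∩ V = {0} such that ‖y‖ ≤ ‖y + v‖ for all y ∈ Y and v ∈ V (i.e. the natural projection from Y + V onto Y has norm 1). Then there exists a weak*-closed subspace Z of X* that is norm-attaining for Y and satisfies V ⊆ Z^⊤ (in particular Z^⊤ ≠ {0}) and Z^⊤ ∩ (Y + V) = V. If moreover Y + V = X, then Y^⊥ ∩ Z = {0}. -/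
section Aux

variable {X : Type*} [NormedAddCommGroup X] [NormedSpace ℝ X]

/-- Hahn–Banach through the quotient: a functional vanishing on `V`, norm ≤ 1,
taking value `‖mk x‖` at `x`. -/
theorem exists_vanishing_functional (V : Submodule ℝ X) [IsClosed (V : Set X)]
    (x : X) (hx : (Submodule.Quotient.mk x : X ⧸ V) ≠ 0) :
    ∃ f : X →L[ℝ] ℝ, (∀ v ∈ V, f v = 0) ∧ ‖f‖ ≤ 1 ∧
      f x = ‖(Submodule.Quotient.mk x : X ⧸ V)‖ := by
  obtain ⟨g, hg1, hgx⟩ := exists_dual_vector ℝ (Submodule.Quotient.mk x : X ⧸ V) (norm_ne_zero_iff.mpr hx)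
  set mkQc : X →L[ℝ] X ⧸ V :=
    LinearMap.mkContinuous V.mkQ 1 (fun y => by simpa using Submodule.Quotient.norm_mk_le V y)
  refine ⟨g.comp mkQc, ?_, ?_, ?_⟩
  · intro v hv
    have : mkQc v = 0 := by
      simpa [mkQc, LinearMap.mkContinuous_apply, Submodule.Quotient.mk_eq_zero] using hv
    simp [this]
  · calc ‖g.comp mkQc‖ ≤ ‖g‖ * ‖mkQc‖ := ContinuousLinearMap.opNorm_comp_le _ _
      _ ≤ 1 * 1 := mul_le_mul hg1.le
          (LinearMap.mkContinuous_norm_le _ zero_le_one _) (norm_nonneg mkQc) zero_le_one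
      _ = 1 := one_mul 1
  · simpa [mkQc, LinearMap.mkContinuous_apply] using hgx

end Aux

/-- If `V ≠ {0}` is a closed subspace of `X` with `Y ∩ V = {0}` such that the natural
projection of `Y + V` onto `Y` has norm one (i.e. `‖y‖ ≤ ‖y + v‖` for `y ∈ Y`, `v ∈ V`),
then there is a weak*-closed subspace `Z` of `X*`, norm-attaining for `Y`, with `V ⊆ Z^⊤`
(in particular `Z^⊤ ≠ {0}`) and `Z^⊤ ∩ (Y + V) = V`; moreover if `Y + V = X` then
`Y^⊥ ∩ Z = {0}`. -/
theorem exists_normAttainingFor_of_norm_one_projection (X : Type*) [NormedAddCommGroup X]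
    [NormedSpace ℝ X] [CompleteSpace X] (Y : Submodule ℝ X) (hY : IsClosed (Y : Set X))
    (V : Submodule ℝ X) (hVc : IsClosed (V : Set X)) (hV0 : V ≠ ⊥) (hYV : Y ⊓ V = ⊥)
    (hproj : ∀ y ∈ Y, ∀ v ∈ V, ‖y‖ ≤ ‖y + v‖) :
    ∃ Z : Submodule ℝ (X →L[ℝ] ℝ), WeakStarClosed Z ∧ NormAttainingFor Y Z ∧
      V ≤ preAnn Z ∧ preAnn Z ≠ ⊥ ∧ preAnn Z ⊓ (Y ⊔ V) = V ∧
      (Y ⊔ V = ⊤ → ∀ f ∈ Z, (∀ y ∈ Y, f y = 0) → f = 0) := by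
  classical
  -- `Z` is the annihilator of `V` in the dual of `X`.
  set Z : Submodule ℝ (X →L[ℝ] ℝ) :=
    { carrier := {f | ∀ v ∈ V, f v = 0}
      add_mem' := by intro a b ha hb v hv; simp [ha v hv, hb v hv]
      zero_mem' := by intro v hv; simp
      smul_mem' := by intro c f hf v hv; simp [hf v hv] } with hZdef
  have hmemZ : ∀ f : X →L[ℝ] ℝ, f ∈ Z ↔ ∀ v ∈ V, f v = 0 := fun f => Iff.rfl
  -- the norm of the class of `x` in `X ⧸ V` is the distance from `x` to `V`
  have hnorm_mk : ∀ x : X, ‖(Submodule.Quotient.mk x : X ⧸ V)‖ = Metric.infDist x V :=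
    fun x => QuotientAddGroup.norm_mk x
  -- `V ≤ preAnn Z`
  have hVpre : V ≤ preAnn Z := fun v hv f hf => hf v hv
  -- `preAnn Z ≤ V`
  have hpreV : preAnn Z ≤ V := by
    intro x hx
    by_contra hxV
    have hmk : (Submodule.Quotient.mk x : X ⧸ V) ≠ 0 := by
      simpa [Submodule.Quotient.mk_eq_zero] using hxV
    obtain ⟨f, hfV, -, hfx⟩ := @exists_vanishing_functional X _ _ V hVc x hmk
    have h0 : f x = 0 := hx f hfV
    rw [hfx, hnorm_mk] at h0
    have : x ∈ closure (V : Set X) := by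
      rw [Metric.mem_closure_iff_infDist_zero ⟨0, V.zero_mem⟩]
      exact h0
    exact hxV (by rwa [hVc.closure_eq] at this)
  have hpre_eq : preAnn Z = V := le_antisymm hpreV hVpre
  refine ⟨Z, ?_, ?_, hVpre, ?_, ?_, ?_⟩
  · -- weak*-closed
    have himg : (StrongDual.toWeakDual '' (Z : Set (X →L[ℝ] ℝ)) : Set (WeakDual ℝ X))
        = ⋂ v ∈ (V : Set X), {g : WeakDual ℝ X | g v = 0} := by
      ext g
      simp only [Set.mem_image, Set.mem_iInter, Set.mem_setOf_eq]
      constructor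
      · rintro ⟨f, hf, rfl⟩ v hv; exact hf v hv
      · intro hg
        exact ⟨StrongDual.toWeakDual.symm g, fun v hv => hg v hv, by simp⟩
    rw [WeakStarClosed, himg]
    exact isClosed_biInter fun v _ =>
      isClosed_eq (WeakDual.eval_continuous v) continuous_const
  · -- norm-attaining for Y
    intro y hy hy1
    have hdist : Metric.infDist y V = 1 := by
      have hge : ∀ v ∈ V, (1 : ℝ) ≤ dist y v := by
        intro v hv
        rw [dist_eq_norm, sub_eq_add_neg]
        calc (1 : ℝ) = ‖y‖ := hy1.symm
          _ ≤ ‖y + -v‖ := hproj y hy (-v) (V.neg_mem hv)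
      refine le_antisymm ?_ ?_
      · calc Metric.infDist y (V : Set X) ≤ dist y 0 := Metric.infDist_le_dist_of_mem V.zero_mem
          _ = 1 := by rw [dist_zero_right, hy1]
      · by_contra h
        push_neg at h
        obtain ⟨v, hv, hlt⟩ := (Metric.infDist_lt_iff ⟨0, V.zero_mem⟩).mp h
        exact absurd (hge v hv) (not_le.mpr hlt)
    have hmkn : ‖(Submodule.Quotient.mk y : X ⧸ V)‖ = 1 := by rw [hnorm_mk, hdist]
    have hmk : (Submodule.Quotient.mk y : X ⧸ V) ≠ 0 := by
      intro h; rw [h, norm_zero] at hmkn; exact one_ne_zero hmkn.symm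
    obtain ⟨f, hfV, hfle, hfy⟩ := @exists_vanishing_functional X _ _ V hVc y hmk
    rw [hmkn] at hfy
    refine ⟨f, hfV, le_antisymm hfle ?_, hfy⟩
    have := f.le_opNorm y
    rw [hy1, mul_one, hfy] at this
    exact le_trans (le_abs_self 1) this
  · -- preAnn Z ≠ ⊥
    rw [hpre_eq]; exact hV0
  · -- preAnn Z ⊓ (Y ⊔ V) = V
    rw [hpre_eq]
    exact inf_eq_left.mpr le_sup_right
  · -- if Y ⊔ V = ⊤ then Z ∩ Y^⊥ = 0
    intro htop f hfZ hfY
    ext x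
    have hx : x ∈ Y ⊔ V := htop ▸ Submodule.mem_top
    obtain ⟨y, hy, v, hv, rfl⟩ := Submodule.mem_sup.mp hx
    simp [hfY y hy, hfZ v hv]
end

section
/- A real Banach space X is 1-projective if and only if every closed subspace Y of X admits a weak*-closed subspace Z of X* that is norm-attaining for Y and satisfies Y^⊥ ∩ Z = {0}. -/
/-- A real Banach space `X` is **1-projective** if every closed subspace of `X` is the range
of a continuous linear projection of norm at most `1`. -/
def OneProjective (X : Type*) [NormedAddCommGroup X] [NormedSpace ℝ X] : Prop :=
  ∀ (Y : Submodule ℝ X), IsClosed (Y : Set X) →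
    ∃ P : X →L[ℝ] X, (∀ x, P (P x) = P x) ∧ ‖P‖ ≤ 1 ∧ LinearMap.range (P : X →ₗ[ℝ] X) = Y

section Aux

variable {X : Type*} [NormedAddCommGroup X] [NormedSpace ℝ X]

/-- Every continuous linear functional on the weak-* dual is evaluation at a point. -/
lemma weakDual_exists_eval (φ : WeakDual ℝ X →L[ℝ] ℝ) :
    ∃ x : X, ∀ g : WeakDual ℝ X, φ g = g x := by
  have hw := WeakDual.withSeminorms ℝ X
  set q : Seminorm ℝ (WeakDual ℝ X) := (normSeminorm ℝ ℝ).comp φ.toLinearMap with hq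
  have hqc : Continuous q := continuous_norm.comp φ.continuous
  obtain ⟨s, C, -, hle⟩ := Seminorm.bound_of_continuous hw q hqc
  set L : s → (WeakDual ℝ X →ₗ[ℝ] ℝ) := fun x => (topDualPairing ℝ X).flip x with hL
  have hker : ⨅ i, LinearMap.ker (L i) ≤ LinearMap.ker φ.toLinearMap := by
    intro g hg
    simp only [Submodule.mem_iInf, LinearMap.mem_ker] at hg
    have h0 : (s.sup (topDualPairing ℝ X).toSeminormFamily) g ≤ 0 := by
      apply Seminorm.finset_sup_apply_le le_rfl
      intro i hi
      have h1 := hg ⟨i, hi⟩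
      simp only [L, LinearMap.flip_apply] at h1
      have : ((topDualPairing ℝ X) g) i = 0 := h1
      show ‖(topDualPairing ℝ X) g i‖ ≤ 0
      rw [this, norm_zero]
    have h00 : (s.sup (topDualPairing ℝ X).toSeminormFamily) g = 0 :=
      le_antisymm h0 (apply_nonneg _ _)
    have h2 : q g ≤ 0 := by
      calc q g ≤ (C • s.sup (topDualPairing ℝ X).toSeminormFamily) g := hle g
        _ = (C : ℝ) • (s.sup (topDualPairing ℝ X).toSeminormFamily) g := rfl
        _ = 0 := by rw [h00]; simp
    have : ‖φ g‖ ≤ 0 := h2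
    simpa [LinearMap.mem_ker] using norm_le_zero_iff.mp this
  have hmem := mem_span_of_iInf_ker_le_ker hker
  rw [Submodule.mem_span_range_iff_exists_fun] at hmem
  obtain ⟨c, hc⟩ := hmem
  refine ⟨∑ i, c i • (i : X), fun g => ?_⟩
  have := congrFun (congrArg (fun (m : WeakDual ℝ X →ₗ[ℝ] ℝ) => (m : WeakDual ℝ X → ℝ)) hc) g
  simp only [LinearMap.coe_sum, Finset.sum_apply, LinearMap.smul_apply] at this
  have h3 : φ g = ∑ x : s, c x • (L x) g := by rw [this]; rfl
  rw [h3, map_sum]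
  simp [L, map_smul]
  rfl

/-- A continuous linear functional bounded above on a submodule vanishes on it. -/
lemma vanish_on_submodule {E : Type*} [AddCommGroup E] [Module ℝ E]
    (p : Submodule ℝ E) (φ : E →ₗ[ℝ] ℝ) {u : ℝ} (h : ∀ a ∈ p, φ a < u) :
    ∀ a ∈ p, φ a = 0 := by
  intro a ha
  by_contra hne
  have hmem : (u / φ a) • a ∈ p := p.smul_mem _ ha
  have := h _ hmem
  rw [map_smul, smul_eq_mul, div_mul_cancel₀ _ hne] at this
  exact lt_irrefl _ this

end Aux

set_option maxHeartbeats 1000000 in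
/-- A real Banach space `X` is `1`-projective if and only if every closed subspace `Y` of `X`
admits a weak*-closed subspace `Z` of `X*` which is norm-attaining for `Y` and satisfies
`Y^⊥ ∩ Z = {0}`. -/
theorem oneProjective_iff_normAttainingFor (X : Type*) [NormedAddCommGroup X]
    [NormedSpace ℝ X] [CompleteSpace X] :
    OneProjective X ↔
      ∀ Y : Submodule ℝ X, IsClosed (Y : Set X) →
        ∃ Z : Submodule ℝ (X →L[ℝ] ℝ), WeakStarClosed Z ∧ NormAttainingFor Y Z ∧
          ∀ f ∈ Z, (∀ y ∈ Y, f y = 0) → f = 0 := by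
  constructor
  · -- forward direction
    intro hX Y hY
    obtain ⟨P, hPP, hP1, hPrange⟩ := hX Y hY
    have hPfix : ∀ y ∈ Y, P y = y := by
      intro y hy
      rw [← hPrange] at hy
      obtain ⟨w, rfl⟩ := hy
      exact hPP w
    refine ⟨{ carrier := {f | ∀ x, f (P x) = f x}
              add_mem' := fun hf hg x => by
                simp only [Set.mem_setOf_eq] at *
                simp [ContinuousLinearMap.add_apply, hf x, hg x]
              zero_mem' := fun x => rfl
              smul_mem' := fun c f hf x => by
                simp only [Set.mem_setOf_eq] at *
                simp [hf x] }, ?_, ?_, ?_⟩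
    · -- weak* closed
      have himg : (StrongDual.toWeakDual ''
          ({f | ∀ x, f (P x) = f x} : Set (X →L[ℝ] ℝ)) : Set (WeakDual ℝ X)) =
          {g : WeakDual ℝ X | ∀ x, g (P x) = g x} := by
        ext g
        constructor
        · rintro ⟨f, hf, rfl⟩
          exact hf
        · intro hg
          exact ⟨g, hg, rfl⟩
      show IsClosed (StrongDual.toWeakDual ''
          ({f | ∀ x, f (P x) = f x} : Set (X →L[ℝ] ℝ)) : Set (WeakDual ℝ X))
      rw [himg]
      have : ({g : WeakDual ℝ X | ∀ x, g (P x) = g x} : Set (WeakDual ℝ X)) =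
          ⋂ x : X, {g : WeakDual ℝ X | g (P x) = g x} := by
        ext g; simp
      rw [this]
      exact isClosed_iInter fun x =>
        isClosed_eq (WeakDual.eval_continuous (P x)) (WeakDual.eval_continuous x)
    · -- norm attaining
      intro y hy hny
      have hyne : y ≠ 0 := by intro h; rw [h] at hny; simp at hny
      obtain ⟨g, hg1, hgy⟩ := exists_dual_vector ℝ y (norm_ne_zero_iff.mpr hyne)
      refine ⟨g.comp P, ?_, ?_, ?_⟩
      · intro x
        simp [hPP x]
      · apply le_antisymm
        · calc ‖g.comp P‖ ≤ ‖g‖ * ‖P‖ := ContinuousLinearMap.opNorm_comp_le _ _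
            _ ≤ 1 * 1 := by rw [hg1]; exact mul_le_mul_of_nonneg_left hP1 zero_le_one
            _ = 1 := one_mul 1
        · have : (1 : ℝ) = g.comp P y := by
            simp [hPfix y hy, hgy, hny]
          calc (1:ℝ) = ‖g.comp P y‖ := by rw [← this]; simp
            _ ≤ ‖g.comp P‖ * ‖y‖ := ContinuousLinearMap.le_opNorm _ _
            _ = ‖g.comp P‖ := by rw [hny, mul_one]
      · simp [hPfix y hy, hgy, hny]
    · -- trivial intersection with annihilator
      intro f hf hfY
      ext x
      have : f (P x) = f x := hf x
      rw [← this]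
      have : P x ∈ Y := by rw [← hPrange]; exact ⟨x, rfl⟩
      simpa using hfY _ this
  · -- backward direction
    intro h Y hY
    obtain ⟨Z, hZc, hna, hann⟩ := h Y hY
    -- the pre-annihilator of Z
    set N : Submodule ℝ X :=
      { carrier := {x | ∀ f ∈ Z, f x = 0}
        add_mem' := fun hx hy f hf => by
          simp only [Set.mem_setOf_eq] at *
          simp [hx f hf, hy f hf]
        zero_mem' := fun f _ => map_zero f
        smul_mem' := fun c x hx f hf => by
          simp only [Set.mem_setOf_eq] at *
          simp [hx f hf] } with hN
    have hNmem : ∀ x, x ∈ N ↔ ∀ f ∈ Z, f x = 0 := fun x => Iff.rfl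
    -- Step A : the key norm inequality
    have stepA : ∀ y ∈ Y, ∀ n ∈ N, ‖y‖ ≤ ‖y + n‖ := by
      intro y hy n hn
      rcases eq_or_ne y 0 with rfl | hyne
      · simp
      · have hnorm : ‖(‖y‖⁻¹ • y)‖ = 1 := by
          rw [norm_smul, norm_inv, norm_norm, inv_mul_cancel₀ (norm_ne_zero_iff.mpr hyne)]
        obtain ⟨f, hfZ, hf1, hfy⟩ := hna _ (Y.smul_mem _ hy) hnorm
        have hfyv : f y = ‖y‖ := by
          rw [map_smul, smul_eq_mul, inv_mul_eq_div,
            div_eq_one_iff_eq (norm_ne_zero_iff.mpr hyne)] at hfy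
          exact hfy
        have hfn : f n = 0 := hn f hfZ
        calc ‖y‖ = f (y + n) := by rw [map_add, hfn, add_zero, hfyv]
          _ ≤ ‖f (y + n)‖ := le_abs_self _
          _ ≤ ‖f‖ * ‖y + n‖ := ContinuousLinearMap.le_opNorm _ _
          _ = ‖y + n‖ := by rw [hf1, one_mul]
    -- Y and N are disjoint
    have hdisj : Disjoint Y N := by
      rw [Submodule.disjoint_def]
      intro x hxY hxN
      have := stepA x hxY (-x) (N.neg_mem hxN)
      simpa using norm_le_zero_iff.mp (by simpa using this)
    set S : Submodule ℝ X := Y ⊔ N with hS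
    -- S is dense
    have hdense : S.topologicalClosure = ⊤ := by
      by_contra hne
      obtain ⟨x, hx⟩ : ∃ x, x ∉ S.topologicalClosure := by
        by_contra hc
        push_neg at hc
        exact hne (Submodule.eq_top_iff'.mpr hc)
      obtain ⟨f, u, hfu, hux⟩ := geometric_hahn_banach_closed_point
        (S.topologicalClosure.convex) (S.isClosed_topologicalClosure) hx
      have hf0 : ∀ a ∈ S.topologicalClosure, f a = 0 :=
        vanish_on_submodule _ f.toLinearMap hfu
      have hfS : ∀ a ∈ S, f a = 0 := fun a ha =>
        hf0 a (S.le_topologicalClosure ha)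
      have hupos : 0 < u := by
        have := hfu 0 (Submodule.zero_mem _)
        simpa using this
      have hfx : u < f x := hux
      -- f vanishes on Y and N
      have hfY : ∀ y ∈ Y, f y = 0 := fun y hy => hfS y (Submodule.mem_sup_left hy)
      have hfN : ∀ n ∈ N, f n = 0 := fun n hn => hfS n (Submodule.mem_sup_right hn)
      -- f belongs to Z
      have hfZ : f ∈ Z := by
        by_contra hfnZ
        set W : Set (WeakDual ℝ X) :=
          (StrongDual.toWeakDual '' (Z : Set (X →L[ℝ] ℝ))) with hW
        have hWclosed : IsClosed W := hZc
        have hWconvex : Convex ℝ W := by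
          have : W = ((Z.map (StrongDual.toWeakDual.toLinearMap :
              (X →L[ℝ] ℝ) →ₗ[ℝ] WeakDual ℝ X)) : Set (WeakDual ℝ X)) := by
            simp [W, Submodule.map_coe]
          rw [this]
          exact Submodule.convex _
        have hfnW : (StrongDual.toWeakDual f : WeakDual ℝ X) ∉ W := by
          rintro ⟨g, hgZ, hgf⟩
          exact hfnZ (by rwa [StrongDual.toWeakDual.injective hgf] at hgZ)
        haveI : LocallyConvexSpace ℝ (WeakDual ℝ X) :=
          WeakBilin.locallyConvexSpace (B := topDualPairing ℝ X)
        obtain ⟨φ, v, hφW, hφf⟩ := geometric_hahn_banach_closed_point hWconvex hWclosed hfnW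
        have hφ0 : ∀ w ∈ Z.map (StrongDual.toWeakDual.toLinearMap :
            (X →L[ℝ] ℝ) →ₗ[ℝ] WeakDual ℝ X), φ w = 0 := by
          apply vanish_on_submodule _ φ.toLinearMap
          intro a ha
          apply hφW
          simp only [W, Submodule.map_coe] at *
          exact ha
        obtain ⟨x₀, hx₀⟩ := weakDual_exists_eval φ
        have hx₀N : x₀ ∈ N := by
          intro g hgZ
          have : φ (StrongDual.toWeakDual g) = 0 :=
            hφ0 _ (Submodule.mem_map_of_mem hgZ)
          rw [hx₀] at this
          exact this
        have hvpos : 0 < v := by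
          have := hφW 0 (by
            simp only [W]
            exact ⟨0, Submodule.zero_mem Z, map_zero _⟩)
          simpa using this
        have : φ (StrongDual.toWeakDual f) = f x₀ := hx₀ _
        rw [hfN x₀ hx₀N] at this
        rw [this] at hφf
        exact absurd hφf (not_lt.mpr hvpos.le)
      -- contradiction
      have : f = 0 := hann f hfZ hfY
      rw [this] at hfx
      simp at hfx
      linarith
    -- Now build the projection
    set Y' : Submodule ℝ S := Y.comap S.subtype with hY'
    set N' : Submodule ℝ S := N.comap S.subtype with hN'
    have hcompl : IsCompl Y' N' := by
      constructor
      · rw [Submodule.disjoint_def]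
        intro x hxY hxN
        have : (x : X) = 0 := (Submodule.disjoint_def.mp hdisj) _ hxY hxN
        exact Subtype.ext this
      · rw [codisjoint_iff_le_sup]
        rintro ⟨s, hs⟩ -
        obtain ⟨a, ha, b, hb, hab⟩ := Submodule.mem_sup.mp hs
        refine Submodule.mem_sup.mpr ⟨⟨a, Submodule.mem_sup_left ha⟩, ?_,
          ⟨b, Submodule.mem_sup_right hb⟩, ?_, ?_⟩
        · exact ha
        · exact hb
        · exact Subtype.ext hab
    set π₀ : S →ₗ[ℝ] Y' := Y'.linearProjOfIsCompl N' hcompl with hπ₀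
    set g : S →ₗ[ℝ] X := S.subtype.comp (Y'.subtype.comp π₀) with hg
    have hgY : ∀ s : S, g s ∈ Y := fun s => (π₀ s).2
    have hgbound : ∀ s : S, ‖g s‖ ≤ 1 * ‖s‖ := by
      intro s
      rw [one_mul]
      have hrem : s - (π₀ s : S) ∈ N' := by
        rw [← Submodule.linearProjOfIsCompl_apply_eq_zero_iff (h := hcompl)]
        rw [map_sub, Submodule.linearProjOfIsCompl_apply_left]; exact sub_self _
      have hn : ((s : X) - g s) ∈ N := hrem
      have := stepA (g s) (hgY s) ((s : X) - g s) hn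
      simpa using this
    have hgfix : ∀ (y : X) (hy : y ∈ Y), g ⟨y, Submodule.mem_sup_left hy⟩ = y := by
      intro y hy
      have hyY' : (⟨y, Submodule.mem_sup_left hy⟩ : S) ∈ Y' := hy
      have : π₀ ⟨y, Submodule.mem_sup_left hy⟩ =
          ⟨⟨y, Submodule.mem_sup_left hy⟩, hyY'⟩ :=
        Submodule.linearProjOfIsCompl_apply_left hcompl ⟨⟨y, Submodule.mem_sup_left hy⟩, hyY'⟩
      simp [g, this]
    set f₀ : S →L[ℝ] X := g.mkContinuous 1 hgbound with hf₀
    set e : S →L[ℝ] X := S.subtypeL with he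
    have h_e : ∀ s : S, ‖s‖ ≤ (1 : NNReal) * ‖e s‖ := by
      intro s; simp [e]
    have hdr : DenseRange e := by
      have : Set.range e = (S : Set X) := Subtype.range_coe
      rw [DenseRange, this]
      rw [Submodule.dense_iff_topologicalClosure_eq_top]
      exact hdense
    set P : X →L[ℝ] X :=
      f₀.extend e
      with hP
    have hPe : ∀ s : S, P (s : X) = f₀ s := fun s =>
      ContinuousLinearMap.extend_eq (f := f₀) hdr
        (ContinuousLinearMap.isUniformEmbedding_of_bound e h_e).isUniformInducing s
    have hPnorm : ‖P‖ ≤ 1 := by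
      have := ContinuousLinearMap.opNorm_extend_le (f := f₀) hdr h_e
      have hf₀n : ‖f₀‖ ≤ 1 := g.mkContinuous_norm_le zero_le_one hgbound
      calc ‖P‖ ≤ (1 : NNReal) * ‖f₀‖ := this
        _ ≤ 1 * 1 := by rw [NNReal.coe_one]; nlinarith [norm_nonneg f₀]
        _ = 1 := one_mul 1
    have hPY : ∀ x, P x ∈ Y := by
      intro x
      have hclosed : IsClosed {x : X | P x ∈ Y} := hY.preimage P.continuous
      refine hdr.induction_on x hclosed ?_
      intro s
      show P (e s) ∈ Y
      rw [show e s = (s : X) from rfl, hPe s]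
      exact hgY s
    have hPfix : ∀ y ∈ Y, P y = y := by
      intro y hy
      have := hPe ⟨y, Submodule.mem_sup_left hy⟩
      rw [this]
      show g ⟨y, Submodule.mem_sup_left hy⟩ = y
      exact hgfix y hy
    refine ⟨P, ?_, hPnorm, ?_⟩
    · intro x
      exact hPfix _ (hPY x)
    · apply le_antisymm
      · rintro _ ⟨x, rfl⟩
        exact hPY x
      · intro y hy
        exact ⟨y, hPfix y hy⟩
end

section
/- The space ℝ³ equipped with the ℓ¹-norm ‖x‖₁ = |x 1| + |x 2| + |x 3| has the self-extension property: for every subspace Y of ℝ³₁ and every linear operator T : Y → Y there exists a linear operator S : ℝ³₁ → ℝ³₁ such that S y = T y for all y ∈ Y and ‖S‖ = ‖T‖ (operator norms with respect to the ℓ¹-norm). -/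
private abbrev XR3 := PiLp 1 fun _ : Fin 3 => ℝ


private lemma max3_add_max3_le {x1 x2 x3 y1 y2 y3 c : ℝ}
    (h11 : x1 + y1 ≤ c) (h12 : x1 + y2 ≤ c) (h13 : x1 + y3 ≤ c)
    (h21 : x2 + y1 ≤ c) (h22 : x2 + y2 ≤ c) (h23 : x2 + y3 ≤ c)
    (h31 : x3 + y1 ≤ c) (h32 : x3 + y2 ≤ c) (h33 : x3 + y3 ≤ c) :
    max (max x1 x2) x3 + max (max y1 y2) y3 ≤ c := by
  rcases max_cases (max x1 x2) x3 with ⟨e1, _⟩ | ⟨e1, _⟩ <;>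
  rcases max_cases x1 x2 with ⟨e2, _⟩ | ⟨e2, _⟩ <;>
  rcases max_cases (max y1 y2) y3 with ⟨e3, _⟩ | ⟨e3, _⟩ <;>
  rcases max_cases y1 y2 with ⟨e4, _⟩ | ⟨e4, _⟩ <;> linarith

private lemma le_min3_add_min3 {u1 u2 u3 v1 v2 v3 c : ℝ}
    (h11 : c ≤ u1 + v1) (h12 : c ≤ u1 + v2) (h13 : c ≤ u1 + v3)
    (h21 : c ≤ u2 + v1) (h22 : c ≤ u2 + v2) (h23 : c ≤ u2 + v3)
    (h31 : c ≤ u3 + v1) (h32 : c ≤ u3 + v2) (h33 : c ≤ u3 + v3) :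
    c ≤ min (min u1 u2) u3 + min (min v1 v2) v3 := by
  rcases min_cases (min u1 u2) u3 with ⟨e1, _⟩ | ⟨e1, _⟩ <;>
  rcases min_cases u1 u2 with ⟨e2, _⟩ | ⟨e2, _⟩ <;>
  rcases min_cases (min v1 v2) v3 with ⟨e3, _⟩ | ⟨e3, _⟩ <;>
  rcases min_cases v1 v2 with ⟨e4, _⟩ | ⟨e4, _⟩ <;> linarith

private lemma max3_le_min3 {x1 x2 x3 u1 u2 u3 : ℝ}
    (h11 : x1 ≤ u1) (h12 : x1 ≤ u2) (h13 : x1 ≤ u3)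
    (h21 : x2 ≤ u1) (h22 : x2 ≤ u2) (h23 : x2 ≤ u3)
    (h31 : x3 ≤ u1) (h32 : x3 ≤ u2) (h33 : x3 ≤ u3) :
    max (max x1 x2) x3 ≤ min (min u1 u2) u3 :=
  max_le (max_le (le_min (le_min h11 h12) h13) (le_min (le_min h21 h22) h23))
    (le_min (le_min h31 h32) h33)

private lemma shape_pp {i0 j3 p0 p1 p2 p3 ri rj rp : ℝ}
    (hp : p0 + p3 = p1 + p2) (h1 : i0 - p0 ≤ ri + rp) (h2 : j3 - p3 ≤ rj + rp) :
    (i0 - ri) + (j3 - rj) ≤ (p1 + rp) + (p2 + rp) := by linarith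

private lemma shape_ii {i0 i1 i2 i3 p1 q2 ri rp rq : ℝ}
    (hp : i0 + i3 = i1 + i2) (h1 : i1 - p1 ≤ ri + rp) (h2 : i2 - q2 ≤ ri + rq) :
    (i0 - ri) + (i3 - ri) ≤ (p1 + rp) + (q2 + rq) := by linarith

private lemma shape_ip {i0 i1 i2 i3 j3 q2 ri rj rq : ℝ}
    (hp : i0 + i3 = i1 + i2) (h1 : j3 - i3 ≤ rj + ri) (h2 : i2 - q2 ≤ ri + rq) :
    (i0 - ri) + (j3 - rj) ≤ (i1 + ri) + (q2 + rq) := by linarith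

private lemma shape_iq {i0 i1 i2 i3 j3 p1 ri rj rp : ℝ}
    (hp : i0 + i3 = i1 + i2) (h1 : j3 - i3 ≤ rj + ri) (h2 : i1 - p1 ≤ ri + rp) :
    (i0 - ri) + (j3 - rj) ≤ (p1 + rp) + (i2 + ri) := by linarith

private lemma shape_jp {i0 j0 j1 j2 j3 q2 ri rj rq : ℝ}
    (hp : j0 + j3 = j1 + j2) (h1 : i0 - j0 ≤ ri + rj) (h2 : j2 - q2 ≤ rj + rq) :
    (i0 - ri) + (j3 - rj) ≤ (j1 + rj) + (q2 + rq) := by linarith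

private lemma shape_jq {i0 j0 j1 j2 j3 p1 ri rj rp : ℝ}
    (hp : j0 + j3 = j1 + j2) (h1 : i0 - j0 ≤ ri + rj) (h2 : j1 - p1 ≤ rj + rp) :
    (i0 - ri) + (j3 - rj) ≤ (p1 + rp) + (j2 + rj) := by linarith


private lemma hardIneq (a0 a1 a2 a3 b0 b1 b2 b3 c0 c1 c2 c3 r s t : ℝ)
    (hr : 0 ≤ r) (hs : 0 ≤ s) (ht : 0 ≤ t)
    (pa : a0 + a3 = a1 + a2) (pb : b0 + b3 = b1 + b2) (pc : c0 + c3 = c1 + c2)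
    (dab0 : a0 - b0 ≤ r + s) (dba0 : b0 - a0 ≤ s + r) (dab1 : a1 - b1 ≤ r + s) (dba1 : b1 - a1 ≤ s + r) (dab2 : a2 - b2 ≤ r + s) (dba2 : b2 - a2 ≤ s + r) (dab3 : a3 - b3 ≤ r + s) (dba3 : b3 - a3 ≤ s + r) (dac0 : a0 - c0 ≤ r + t) (dca0 : c0 - a0 ≤ t + r) (dac1 : a1 - c1 ≤ r + t) (dca1 : c1 - a1 ≤ t + r) (dac2 : a2 - c2 ≤ r + t) (dca2 : c2 - a2 ≤ t + r) (dac3 : a3 - c3 ≤ r + t) (dca3 : c3 - a3 ≤ t + r) (dbc0 : b0 - c0 ≤ s + t) (dcb0 : c0 - b0 ≤ t + s) (dbc1 : b1 - c1 ≤ s + t) (dcb1 : c1 - b1 ≤ t + s) (dbc2 : b2 - c2 ≤ s + t) (dcb2 : c2 - b2 ≤ t + s) (dbc3 : b3 - c3 ≤ s + t) (dcb3 : c3 - b3 ≤ t + s) :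
    max (max (a0 - r) (b0 - s)) (c0 - t) + max (max (a3 - r) (b3 - s)) (c3 - t) ≤
      min (min (a1 + r) (b1 + s)) (c1 + t) + min (min (a2 + r) (b2 + s)) (c2 + t) := by
  have daa0 : a0 - a0 ≤ r + r := by linarith
  have daa1 : a1 - a1 ≤ r + r := by linarith
  have daa2 : a2 - a2 ≤ r + r := by linarith
  have daa3 : a3 - a3 ≤ r + r := by linarith
  have dbb0 : b0 - b0 ≤ s + s := by linarith
  have dbb1 : b1 - b1 ≤ s + s := by linarith
  have dbb2 : b2 - b2 ≤ s + s := by linarith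
  have dbb3 : b3 - b3 ≤ s + s := by linarith
  have dcc0 : c0 - c0 ≤ t + t := by linarith
  have dcc1 : c1 - c1 ≤ t + t := by linarith
  have dcc2 : c2 - c2 ≤ t + t := by linarith
  have dcc3 : c3 - c3 ≤ t + t := by linarith
  exact max3_add_max3_le
    (le_min3_add_min3 (shape_pp pa daa0 daa3) (shape_ii pa daa1 dab2) (shape_ii pa daa1 dac2) (shape_ii pa dab1 daa2) (shape_pp pb dab0 dab3) (shape_ii pa dab1 dac2) (shape_ii pa dac1 daa2) (shape_ii pa dac1 dab2) (shape_pp pc dac0 dac3))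
    (le_min3_add_min3 (shape_pp pa daa0 dba3) (shape_ip pa dba3 dab2) (shape_ip pa dba3 dac2) (shape_iq pa dba3 dab1) (shape_pp pb dab0 dbb3) (shape_jp pb dab0 dbc2) (shape_iq pa dba3 dac1) (shape_jq pb dab0 dbc1) (shape_pp pc dac0 dbc3))
    (le_min3_add_min3 (shape_pp pa daa0 dca3) (shape_ip pa dca3 dab2) (shape_ip pa dca3 dac2) (shape_iq pa dca3 dab1) (shape_pp pb dab0 dcb3) (shape_jq pc dac0 dcb1) (shape_iq pa dca3 dac1) (shape_jp pc dac0 dcb2) (shape_pp pc dac0 dcc3))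
    (le_min3_add_min3 (shape_pp pa dba0 daa3) (shape_iq pb dab3 dba1) (shape_jp pa dba0 dac2) (shape_ip pb dab3 dba2) (shape_pp pb dbb0 dab3) (shape_ip pb dab3 dbc2) (shape_jq pa dba0 dac1) (shape_iq pb dab3 dbc1) (shape_pp pc dbc0 dac3))
    (le_min3_add_min3 (shape_pp pa dba0 dba3) (shape_ii pb dba1 dbb2) (shape_ii pb dba1 dbc2) (shape_ii pb dbb1 dba2) (shape_pp pb dbb0 dbb3) (shape_ii pb dbb1 dbc2) (shape_ii pb dbc1 dba2) (shape_ii pb dbc1 dbb2) (shape_pp pc dbc0 dbc3))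
    (le_min3_add_min3 (shape_pp pa dba0 dca3) (shape_iq pb dcb3 dba1) (shape_jq pc dbc0 dca1) (shape_ip pb dcb3 dba2) (shape_pp pb dbb0 dcb3) (shape_ip pb dcb3 dbc2) (shape_jp pc dbc0 dca2) (shape_iq pb dcb3 dbc1) (shape_pp pc dbc0 dcc3))
    (le_min3_add_min3 (shape_pp pa dca0 daa3) (shape_jp pa dca0 dab2) (shape_iq pc dac3 dca1) (shape_jq pa dca0 dab1) (shape_pp pb dcb0 dab3) (shape_iq pc dac3 dcb1) (shape_ip pc dac3 dca2) (shape_ip pc dac3 dcb2) (shape_pp pc dcc0 dac3))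
    (le_min3_add_min3 (shape_pp pa dca0 dba3) (shape_jq pb dcb0 dba1) (shape_iq pc dbc3 dca1) (shape_jp pb dcb0 dba2) (shape_pp pb dcb0 dbb3) (shape_iq pc dbc3 dcb1) (shape_ip pc dbc3 dca2) (shape_ip pc dbc3 dcb2) (shape_pp pc dcc0 dbc3))
    (le_min3_add_min3 (shape_pp pa dca0 dca3) (shape_ii pc dca1 dcb2) (shape_ii pc dca1 dcc2) (shape_ii pc dcb1 dca2) (shape_pp pb dcb0 dcb3) (shape_ii pc dcb1 dcc2) (shape_ii pc dcc1 dca2) (shape_ii pc dcc1 dcb2) (shape_pp pc dcc0 dcc3))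

set_option maxHeartbeats 2000000 in
private lemma helly (p0 p1 p2 q0 q1 q2 w0 w1 w2 r s t : ℝ)
    (hr : 0 ≤ r) (hs : 0 ≤ s) (ht : 0 ≤ t)
    (hpq : |p0 - q0| + |p1 - q1| + |p2 - q2| ≤ r + s)
    (hpw : |p0 - w0| + |p1 - w1| + |p2 - w2| ≤ r + t)
    (hqw : |q0 - w0| + |q1 - w1| + |q2 - w2| ≤ s + t) :
    ∃ z0 z1 z2 : ℝ,
      |z0 - p0| + |z1 - p1| + |z2 - p2| ≤ r ∧
      |z0 - q0| + |z1 - q1| + |z2 - q2| ≤ s ∧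
      |z0 - w0| + |z1 - w1| + |z2 - w2| ≤ t := by
  have dab0 : (p0 + p1 + p2) - (q0 + q1 + q2) ≤ r + s := by linarith [le_abs_self (p0 - q0), neg_abs_le (p0 - q0), le_abs_self (p1 - q1), neg_abs_le (p1 - q1), le_abs_self (p2 - q2), neg_abs_le (p2 - q2)]
  have dba0 : (q0 + q1 + q2) - (p0 + p1 + p2) ≤ s + r := by linarith [le_abs_self (p0 - q0), neg_abs_le (p0 - q0), le_abs_self (p1 - q1), neg_abs_le (p1 - q1), le_abs_self (p2 - q2), neg_abs_le (p2 - q2)]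
  have dab1 : (p0 + p1 - p2) - (q0 + q1 - q2) ≤ r + s := by linarith [le_abs_self (p0 - q0), neg_abs_le (p0 - q0), le_abs_self (p1 - q1), neg_abs_le (p1 - q1), le_abs_self (p2 - q2), neg_abs_le (p2 - q2)]
  have dba1 : (q0 + q1 - q2) - (p0 + p1 - p2) ≤ s + r := by linarith [le_abs_self (p0 - q0), neg_abs_le (p0 - q0), le_abs_self (p1 - q1), neg_abs_le (p1 - q1), le_abs_self (p2 - q2), neg_abs_le (p2 - q2)]
  have dab2 : (p0 - p1 + p2) - (q0 - q1 + q2) ≤ r + s := by linarith [le_abs_self (p0 - q0), neg_abs_le (p0 - q0), le_abs_self (p1 - q1), neg_abs_le (p1 - q1), le_abs_self (p2 - q2), neg_abs_le (p2 - q2)]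
  have dba2 : (q0 - q1 + q2) - (p0 - p1 + p2) ≤ s + r := by linarith [le_abs_self (p0 - q0), neg_abs_le (p0 - q0), le_abs_self (p1 - q1), neg_abs_le (p1 - q1), le_abs_self (p2 - q2), neg_abs_le (p2 - q2)]
  have dab3 : (p0 - p1 - p2) - (q0 - q1 - q2) ≤ r + s := by linarith [le_abs_self (p0 - q0), neg_abs_le (p0 - q0), le_abs_self (p1 - q1), neg_abs_le (p1 - q1), le_abs_self (p2 - q2), neg_abs_le (p2 - q2)]
  have dba3 : (q0 - q1 - q2) - (p0 - p1 - p2) ≤ s + r := by linarith [le_abs_self (p0 - q0), neg_abs_le (p0 - q0), le_abs_self (p1 - q1), neg_abs_le (p1 - q1), le_abs_self (p2 - q2), neg_abs_le (p2 - q2)]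
  have dac0 : (p0 + p1 + p2) - (w0 + w1 + w2) ≤ r + t := by linarith [le_abs_self (p0 - w0), neg_abs_le (p0 - w0), le_abs_self (p1 - w1), neg_abs_le (p1 - w1), le_abs_self (p2 - w2), neg_abs_le (p2 - w2)]
  have dca0 : (w0 + w1 + w2) - (p0 + p1 + p2) ≤ t + r := by linarith [le_abs_self (p0 - w0), neg_abs_le (p0 - w0), le_abs_self (p1 - w1), neg_abs_le (p1 - w1), le_abs_self (p2 - w2), neg_abs_le (p2 - w2)]
  have dac1 : (p0 + p1 - p2) - (w0 + w1 - w2) ≤ r + t := by linarith [le_abs_self (p0 - w0), neg_abs_le (p0 - w0), le_abs_self (p1 - w1), neg_abs_le (p1 - w1), le_abs_self (p2 - w2), neg_abs_le (p2 - w2)]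
  have dca1 : (w0 + w1 - w2) - (p0 + p1 - p2) ≤ t + r := by linarith [le_abs_self (p0 - w0), neg_abs_le (p0 - w0), le_abs_self (p1 - w1), neg_abs_le (p1 - w1), le_abs_self (p2 - w2), neg_abs_le (p2 - w2)]
  have dac2 : (p0 - p1 + p2) - (w0 - w1 + w2) ≤ r + t := by linarith [le_abs_self (p0 - w0), neg_abs_le (p0 - w0), le_abs_self (p1 - w1), neg_abs_le (p1 - w1), le_abs_self (p2 - w2), neg_abs_le (p2 - w2)]
  have dca2 : (w0 - w1 + w2) - (p0 - p1 + p2) ≤ t + r := by linarith [le_abs_self (p0 - w0), neg_abs_le (p0 - w0), le_abs_self (p1 - w1), neg_abs_le (p1 - w1), le_abs_self (p2 - w2), neg_abs_le (p2 - w2)]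
  have dac3 : (p0 - p1 - p2) - (w0 - w1 - w2) ≤ r + t := by linarith [le_abs_self (p0 - w0), neg_abs_le (p0 - w0), le_abs_self (p1 - w1), neg_abs_le (p1 - w1), le_abs_self (p2 - w2), neg_abs_le (p2 - w2)]
  have dca3 : (w0 - w1 - w2) - (p0 - p1 - p2) ≤ t + r := by linarith [le_abs_self (p0 - w0), neg_abs_le (p0 - w0), le_abs_self (p1 - w1), neg_abs_le (p1 - w1), le_abs_self (p2 - w2), neg_abs_le (p2 - w2)]
  have dbc0 : (q0 + q1 + q2) - (w0 + w1 + w2) ≤ s + t := by linarith [le_abs_self (q0 - w0), neg_abs_le (q0 - w0), le_abs_self (q1 - w1), neg_abs_le (q1 - w1), le_abs_self (q2 - w2), neg_abs_le (q2 - w2)]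
  have dcb0 : (w0 + w1 + w2) - (q0 + q1 + q2) ≤ t + s := by linarith [le_abs_self (q0 - w0), neg_abs_le (q0 - w0), le_abs_self (q1 - w1), neg_abs_le (q1 - w1), le_abs_self (q2 - w2), neg_abs_le (q2 - w2)]
  have dbc1 : (q0 + q1 - q2) - (w0 + w1 - w2) ≤ s + t := by linarith [le_abs_self (q0 - w0), neg_abs_le (q0 - w0), le_abs_self (q1 - w1), neg_abs_le (q1 - w1), le_abs_self (q2 - w2), neg_abs_le (q2 - w2)]
  have dcb1 : (w0 + w1 - w2) - (q0 + q1 - q2) ≤ t + s := by linarith [le_abs_self (q0 - w0), neg_abs_le (q0 - w0), le_abs_self (q1 - w1), neg_abs_le (q1 - w1), le_abs_self (q2 - w2), neg_abs_le (q2 - w2)]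
  have dbc2 : (q0 - q1 + q2) - (w0 - w1 + w2) ≤ s + t := by linarith [le_abs_self (q0 - w0), neg_abs_le (q0 - w0), le_abs_self (q1 - w1), neg_abs_le (q1 - w1), le_abs_self (q2 - w2), neg_abs_le (q2 - w2)]
  have dcb2 : (w0 - w1 + w2) - (q0 - q1 + q2) ≤ t + s := by linarith [le_abs_self (q0 - w0), neg_abs_le (q0 - w0), le_abs_self (q1 - w1), neg_abs_le (q1 - w1), le_abs_self (q2 - w2), neg_abs_le (q2 - w2)]
  have dbc3 : (q0 - q1 - q2) - (w0 - w1 - w2) ≤ s + t := by linarith [le_abs_self (q0 - w0), neg_abs_le (q0 - w0), le_abs_self (q1 - w1), neg_abs_le (q1 - w1), le_abs_self (q2 - w2), neg_abs_le (q2 - w2)]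
  have dcb3 : (w0 - w1 - w2) - (q0 - q1 - q2) ≤ t + s := by linarith [le_abs_self (q0 - w0), neg_abs_le (q0 - w0), le_abs_self (q1 - w1), neg_abs_le (q1 - w1), le_abs_self (q2 - w2), neg_abs_le (q2 - w2)]
  have pa : (p0 + p1 + p2) + (p0 - p1 - p2) = (p0 + p1 - p2) + (p0 - p1 + p2) := by ring
  have pb : (q0 + q1 + q2) + (q0 - q1 - q2) = (q0 + q1 - q2) + (q0 - q1 + q2) := by ring
  have pc : (w0 + w1 + w2) + (w0 - w1 - w2) = (w0 + w1 - w2) + (w0 - w1 + w2) := by ring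
  set L0 := max (max ((p0 + p1 + p2) - r) ((q0 + q1 + q2) - s)) ((w0 + w1 + w2) - t) with hL0
  set H0 := min (min ((p0 + p1 + p2) + r) ((q0 + q1 + q2) + s)) ((w0 + w1 + w2) + t) with hH0
  set L1 := max (max ((p0 + p1 - p2) - r) ((q0 + q1 - q2) - s)) ((w0 + w1 - w2) - t) with hL1
  set H1 := min (min ((p0 + p1 - p2) + r) ((q0 + q1 - q2) + s)) ((w0 + w1 - w2) + t) with hH1
  set L2 := max (max ((p0 - p1 + p2) - r) ((q0 - q1 + q2) - s)) ((w0 - w1 + w2) - t) with hL2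
  set H2 := min (min ((p0 - p1 + p2) + r) ((q0 - q1 + q2) + s)) ((w0 - w1 + w2) + t) with hH2
  set L3 := max (max ((p0 - p1 - p2) - r) ((q0 - q1 - q2) - s)) ((w0 - w1 - w2) - t) with hL3
  set H3 := min (min ((p0 - p1 - p2) + r) ((q0 - q1 - q2) + s)) ((w0 - w1 - w2) + t) with hH3
  have lh0 : L0 ≤ H0 := by rw [hL0, hH0]; exact max3_le_min3 (by linarith) (by linarith) (by linarith) (by linarith) (by linarith) (by linarith) (by linarith) (by linarith) (by linarith)
  have lh1 : L1 ≤ H1 := by rw [hL1, hH1]; exact max3_le_min3 (by linarith) (by linarith) (by linarith) (by linarith) (by linarith) (by linarith) (by linarith) (by linarith) (by linarith)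
  have lh2 : L2 ≤ H2 := by rw [hL2, hH2]; exact max3_le_min3 (by linarith) (by linarith) (by linarith) (by linarith) (by linarith) (by linarith) (by linarith) (by linarith) (by linarith)
  have lh3 : L3 ≤ H3 := by rw [hL3, hH3]; exact max3_le_min3 (by linarith) (by linarith) (by linarith) (by linarith) (by linarith) (by linarith) (by linarith) (by linarith) (by linarith)
  have hard1 : L0 + L3 ≤ H1 + H2 := by rw [hL0, hL3, hH1, hH2]; apply hardIneq <;> first | assumption | ring | linarith
  have hard2 : L1 + L2 ≤ H0 + H3 := by rw [hL1, hL2, hH0, hH3]; apply hardIneq <;> first | assumption | ring | linarith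
  have bLa0 : (p0 + p1 + p2) - r ≤ L0 := by rw [hL0]; exact le_trans (le_max_left _ _) (le_max_left _ _)
  have bHa0 : H0 ≤ (p0 + p1 + p2) + r := by rw [hH0]; exact le_trans (min_le_left _ _) (min_le_left _ _)
  have bLa1 : (p0 + p1 - p2) - r ≤ L1 := by rw [hL1]; exact le_trans (le_max_left _ _) (le_max_left _ _)
  have bHa1 : H1 ≤ (p0 + p1 - p2) + r := by rw [hH1]; exact le_trans (min_le_left _ _) (min_le_left _ _)
  have bLa2 : (p0 - p1 + p2) - r ≤ L2 := by rw [hL2]; exact le_trans (le_max_left _ _) (le_max_left _ _)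
  have bHa2 : H2 ≤ (p0 - p1 + p2) + r := by rw [hH2]; exact le_trans (min_le_left _ _) (min_le_left _ _)
  have bLa3 : (p0 - p1 - p2) - r ≤ L3 := by rw [hL3]; exact le_trans (le_max_left _ _) (le_max_left _ _)
  have bHa3 : H3 ≤ (p0 - p1 - p2) + r := by rw [hH3]; exact le_trans (min_le_left _ _) (min_le_left _ _)
  have bLb0 : (q0 + q1 + q2) - s ≤ L0 := by rw [hL0]; exact le_trans (le_max_right _ _) (le_max_left _ _)
  have bHb0 : H0 ≤ (q0 + q1 + q2) + s := by rw [hH0]; exact le_trans (min_le_left _ _) (min_le_right _ _)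
  have bLb1 : (q0 + q1 - q2) - s ≤ L1 := by rw [hL1]; exact le_trans (le_max_right _ _) (le_max_left _ _)
  have bHb1 : H1 ≤ (q0 + q1 - q2) + s := by rw [hH1]; exact le_trans (min_le_left _ _) (min_le_right _ _)
  have bLb2 : (q0 - q1 + q2) - s ≤ L2 := by rw [hL2]; exact le_trans (le_max_right _ _) (le_max_left _ _)
  have bHb2 : H2 ≤ (q0 - q1 + q2) + s := by rw [hH2]; exact le_trans (min_le_left _ _) (min_le_right _ _)
  have bLb3 : (q0 - q1 - q2) - s ≤ L3 := by rw [hL3]; exact le_trans (le_max_right _ _) (le_max_left _ _)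
  have bHb3 : H3 ≤ (q0 - q1 - q2) + s := by rw [hH3]; exact le_trans (min_le_left _ _) (min_le_right _ _)
  have bLc0 : (w0 + w1 + w2) - t ≤ L0 := by rw [hL0]; exact le_max_right _ _
  have bHc0 : H0 ≤ (w0 + w1 + w2) + t := by rw [hH0]; exact min_le_right _ _
  have bLc1 : (w0 + w1 - w2) - t ≤ L1 := by rw [hL1]; exact le_max_right _ _
  have bHc1 : H1 ≤ (w0 + w1 - w2) + t := by rw [hH1]; exact min_le_right _ _
  have bLc2 : (w0 - w1 + w2) - t ≤ L2 := by rw [hL2]; exact le_max_right _ _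
  have bHc2 : H2 ≤ (w0 - w1 + w2) + t := by rw [hH2]; exact min_le_right _ _
  have bLc3 : (w0 - w1 - w2) - t ≤ L3 := by rw [hL3]; exact le_max_right _ _
  have bHc3 : H3 ≤ (w0 - w1 - w2) + t := by rw [hH3]; exact min_le_right _ _
  set V := max (L0 + L3) (L1 + L2) with hV
  have hVa : V ≤ H0 + H3 := max_le (by linarith) hard2
  have hVb : V ≤ H1 + H2 := max_le hard1 (by linarith)
  have hV1 : L0 + L3 ≤ V := le_max_left _ _
  have hV2 : L1 + L2 ≤ V := le_max_right _ _
  set U0 := max L0 (V - H3) with hU0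
  set U1 := max L1 (V - H2) with hU1
  have bU0a : L0 ≤ U0 := le_max_left _ _
  have bU0b : U0 ≤ H0 := by rw [hU0]; exact max_le lh0 (by linarith)
  have bU3a : L3 ≤ V - U0 := by
    rw [hU0]; rcases max_cases L0 (V - H3) with ⟨e, _⟩ | ⟨e, _⟩ <;> rw [e] <;> linarith
  have bU3b : V - U0 ≤ H3 := by rw [hU0]; linarith [le_max_right L0 (V - H3)]
  have bU1a : L1 ≤ U1 := le_max_left _ _
  have bU1b : U1 ≤ H1 := by rw [hU1]; exact max_le lh1 (by linarith)
  have bU2a : L2 ≤ V - U1 := by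
    rw [hU1]; rcases max_cases L1 (V - H2) with ⟨e, _⟩ | ⟨e, _⟩ <;> rw [e] <;> linarith
  have bU2b : V - U1 ≤ H2 := by rw [hU1]; linarith [le_max_right L1 (V - H2)]
  refine ⟨V / 2, (U0 + U1 - V) / 2, (U0 - U1) / 2, ?_, ?_, ?_⟩
  · rcases abs_cases (V / 2 - p0) with ⟨e1, _⟩ | ⟨e1, _⟩ <;>
      rcases abs_cases ((U0 + U1 - V) / 2 - p1) with ⟨e2, _⟩ | ⟨e2, _⟩ <;>
      rcases abs_cases ((U0 - U1) / 2 - p2) with ⟨e3, _⟩ | ⟨e3, _⟩ <;>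
      linarith [bLa0, bHa0, bLa1, bHa1, bLa2, bHa2, bLa3, bHa3]
  · rcases abs_cases (V / 2 - q0) with ⟨e1, _⟩ | ⟨e1, _⟩ <;>
      rcases abs_cases ((U0 + U1 - V) / 2 - q1) with ⟨e2, _⟩ | ⟨e2, _⟩ <;>
      rcases abs_cases ((U0 - U1) / 2 - q2) with ⟨e3, _⟩ | ⟨e3, _⟩ <;>
      linarith [bLb0, bHb0, bLb1, bHb1, bLb2, bHb2, bLb3, bHb3]
  · rcases abs_cases (V / 2 - w0) with ⟨e1, _⟩ | ⟨e1, _⟩ <;>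
      rcases abs_cases ((U0 + U1 - V) / 2 - w1) with ⟨e2, _⟩ | ⟨e2, _⟩ <;>
      rcases abs_cases ((U0 - U1) / 2 - w2) with ⟨e3, _⟩ | ⟨e3, _⟩ <;>
      linarith [bLc0, bHc0, bLc1, bHc1, bLc2, bHc2, bLc3, bHc3]

private lemma norm_eqX (x : XR3) : ‖x‖ = |x 0| + |x 1| + |x 2| := by
  have := PiLp.norm_eq_sum (p := 1) (f := x) (by norm_num)
  simp [Fin.sum_univ_three, Real.norm_eq_abs] at this
  linarith

private noncomputable def EE : Fin 3 → XR3 := fun j => WithLp.toLp 1 (fun k => if k = j then (1 : ℝ) else 0)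

private lemma EE_apply (j k : Fin 3) : EE j k = if k = j then (1 : ℝ) else 0 := rfl

private lemma normE (j : Fin 3) : ‖EE j‖ = 1 := by
  rw [norm_eqX]; fin_cases j <;> simp [EE_apply]

private lemma hxsum (x : XR3) : x = x 0 • EE 0 + x 1 • EE 1 + x 2 • EE 2 := by
  ext k
  fin_cases k <;> simp [EE_apply]

private noncomputable def mkL (s : Fin 3 → XR3) : XR3 →ₗ[ℝ] XR3 where
  toFun x := x 0 • s 0 + x 1 • s 1 + x 2 • s 2
  map_add' x y := by
    show (x + y) 0 • s 0 + (x + y) 1 • s 1 + (x + y) 2 • s 2 = _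
    simp only [PiLp.add_apply, add_smul]
    abel
  map_smul' c x := by
    show (c • x) 0 • s 0 + (c • x) 1 • s 1 + (c • x) 2 • s 2 = _
    simp only [PiLp.smul_apply, smul_eq_mul, mul_smul, RingHom.id_apply, smul_add]

private noncomputable def mkS (s : Fin 3 → XR3) : XR3 →L[ℝ] XR3 :=
  LinearMap.toContinuousLinearMap (mkL s)

private lemma mkS_apply (s : Fin 3 → XR3) (x : XR3) :
    mkS s x = x 0 • s 0 + x 1 • s 1 + x 2 • s 2 := rfl

private lemma mkS_norm_le (s : Fin 3 → XR3) (M : ℝ) (hM : 0 ≤ M) (h : ∀ j, ‖s j‖ ≤ M) :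
    ‖mkS s‖ ≤ M := by
  apply ContinuousLinearMap.opNorm_le_bound _ hM
  intro x
  rw [mkS_apply, norm_eqX x]
  calc ‖x 0 • s 0 + x 1 • s 1 + x 2 • s 2‖ ≤ ‖x 0 • s 0‖ + ‖x 1 • s 1‖ + ‖x 2 • s 2‖ :=
        norm_add₃_le
    _ ≤ |x 0| * M + |x 1| * M + |x 2| * M := by
        gcongr <;> simp [norm_smul, Real.norm_eq_abs] <;>
          exact mul_le_mul_of_nonneg_left (h _) (abs_nonneg _)
    _ = M * (|x 0| + |x 1| + |x 2|) := by ring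

private lemma combo_eq (c : Fin 3 → XR3) (a b : Fin 3) (u w : ℝ) :
    (u * EE a 0 - w * EE b 0) • c 0 + (u * EE a 1 - w * EE b 1) • c 1
      + (u * EE a 2 - w * EE b 2) • c 2 = u • c a - w • c b := by
  have h3 : ∀ x : Fin 3, x = 0 ∨ x = 1 ∨ x = 2 := by decide
  rcases h3 a with rfl | rfl | rfl <;> rcases h3 b with rfl | rfl | rfl <;>
    norm_num [EE_apply, Fin.ext_iff] <;> module

set_option maxHeartbeats 2000000 in
/-- `ℝ³` with the `ℓ¹`-norm has the self-extension property: every linear operator on a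
subspace of `ℝ³₁` extends to a linear operator on `ℝ³₁` with the same operator norm. -/
theorem selfExt_R3_l1 :
    ∀ (Y : Submodule ℝ (PiLp 1 fun _ : Fin 3 => ℝ)) (T : Y →L[ℝ] Y),
      ∃ S : (PiLp 1 fun _ : Fin 3 => ℝ) →L[ℝ] (PiLp 1 fun _ : Fin 3 => ℝ),
        (∀ y : Y, S y = (T y : PiLp 1 fun _ : Fin 3 => ℝ)) ∧ ‖S‖ = ‖T‖ := by
  intro Y T
  suffices h : ∃ S : XR3 →L[ℝ] XR3, (∀ y : Y, S y = (T y : XR3)) ∧ ‖S‖ ≤ ‖T‖ by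
    obtain ⟨S, h1, h2⟩ := h
    refine ⟨S, h1, le_antisymm h2 ?_⟩
    apply ContinuousLinearMap.opNorm_le_bound _ (norm_nonneg S)
    intro y
    calc ‖T y‖ = ‖(T y : XR3)‖ := rfl
      _ = ‖S (y : XR3)‖ := by rw [h1 y]
      _ ≤ ‖S‖ * ‖(y : XR3)‖ := S.le_opNorm _
      _ = ‖S‖ * ‖y‖ := rfl
  have hX3 : Module.finrank ℝ XR3 = 3 := by
    simp [Module.finrank_eq_card_basis (PiLp.basisFun 1 ℝ (Fin 3))]
  have hle : Module.finrank ℝ Y ≤ 3 := by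
    have h := Submodule.finrank_le Y
    rw [hX3] at h
    exact h
  obtain h0 | h1 | h2 | h3 : Module.finrank ℝ Y = 0 ∨ Module.finrank ℝ Y = 1 ∨
      Module.finrank ℝ Y = 2 ∨ Module.finrank ℝ Y = 3 := by omega
  -- dimension 0
  · rw [Submodule.finrank_eq_zero] at h0
    refine ⟨0, fun y => ?_, by rw [norm_zero]; exact norm_nonneg T⟩
    have hy : y = 0 := by
      apply Subtype.ext
      have hm : (y : XR3) ∈ (⊥ : Submodule ℝ XR3) := by rw [← h0]; exact y.2
      simpa [Submodule.mem_bot] using hm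
    rw [hy]
    simp
  -- dimension 1
  · obtain ⟨v, hv0, hv⟩ := finrank_eq_one_iff'.mp h1
    have hvX : (v : XR3) ≠ 0 := fun h => hv0 (Subtype.ext h)
    have hN : 0 < ‖(v : XR3)‖ := norm_pos_iff.mpr hvX
    set N := ‖(v : XR3)‖ with hNdef
    set w : XR3 := (T v : XR3) with hw
    have hwle : ‖w‖ ≤ ‖T‖ * N := T.le_opNorm v
    set sg : Fin 3 → ℝ := fun j => if (v : XR3) j < 0 then -1 else 1 with hsg
    set s : Fin 3 → XR3 := fun j => (sg j / N) • w with hs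
    have habs : ∀ j, sg j * (v : XR3) j = |(v : XR3) j| := by
      intro j
      rw [hsg]
      dsimp only
      split_ifs with h
      · rw [abs_of_neg h]; ring
      · rw [abs_of_nonneg (not_lt.mp h)]; ring
    have hsgabs : ∀ j, |sg j| = 1 := by
      intro j; rw [hsg]; dsimp only; split_ifs <;> norm_num
    refine ⟨mkS s, ?_, ?_⟩
    · intro y
      obtain ⟨c, hc⟩ := hv y
      rw [← hc, mkS_apply]
      have hcoord : ∀ j, ((((c • v : Y)) : XR3)) j = c * (v : XR3) j := by
        intro j; rw [Submodule.coe_smul]; rfl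
      have hterm : ∀ j, (((c • v : Y) : XR3)) j • s j = (c * |(v : XR3) j| / N) • w := by
        intro j
        rw [hcoord j, hs]
        dsimp only
        rw [smul_smul]
        congr 1
        rw [← habs j]
        ring
      rw [hterm 0, hterm 1, hterm 2, ← add_smul, ← add_smul]
      have hsum : |(v : XR3) 0| + |(v : XR3) 1| + |(v : XR3) 2| = N := (norm_eqX _).symm
      have hcoeff : c * |(v : XR3) 0| / N + c * |(v : XR3) 1| / N + c * |(v : XR3) 2| / N = c := by
        field_simp
        linear_combination c * hsum
      rw [hcoeff, map_smul, Submodule.coe_smul, hw]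
    · apply mkS_norm_le _ _ (norm_nonneg T)
      intro j
      rw [hs]
      dsimp only
      rw [norm_smul, Real.norm_eq_abs, abs_div, hsgabs j, abs_of_pos hN]
      rw [div_mul_eq_mul_div, one_mul, div_le_iff₀ hN]
      exact hwle
  -- dimension 2
  · -- dimension 2
    have hQ1 : Module.finrank ℝ (XR3 ⧸ Y) = 1 := by
      have hq : Module.finrank ℝ (XR3 ⧸ Y) + Module.finrank ℝ Y = Module.finrank ℝ XR3 :=
        Submodule.finrank_quotient_add_finrank Y
      rw [hX3, h2] at hq
      omega
    set ψ : (XR3 ⧸ Y) ≃ₗ[ℝ] ℝ :=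
      LinearEquiv.ofFinrankEq _ _ (by rw [hQ1, Module.finrank_self]) with hψdef
    set φ : XR3 →ₗ[ℝ] ℝ := ψ.toLinearMap ∘ₗ Y.mkQ with hφdef
    have hker : LinearMap.ker φ = Y := by
      rw [hφdef, LinearMap.ker_comp, LinearEquiv.ker, Submodule.comap_bot, Submodule.ker_mkQ]
    have hmem : ∀ x : XR3, φ x = 0 → x ∈ Y := fun x h => hker ▸ LinearMap.mem_ker.mpr h
    have hmem' : ∀ x : XR3, x ∈ Y → φ x = 0 := fun x h =>
      LinearMap.mem_ker.mp (by rw [hker]; exact h)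
    set f : Fin 3 → ℝ := fun j => φ (EE j) with hf
    have hfj : ∀ j, φ (EE j) = f j := fun j => rfl
    have hφx : ∀ x : XR3, φ x = x 0 * f 0 + x 1 * f 1 + x 2 * f 2 := by
      intro x
      conv_lhs => rw [hxsum x]
      rw [map_add, map_add, map_smul, map_smul, map_smul, hfj, hfj, hfj]
      simp [smul_eq_mul]
    have hfex : ∃ j, f j ≠ 0 := by
      by_contra hc
      push_neg at hc
      have hY : Y = ⊤ := by
        rw [← hker, eq_top_iff]
        intro x _
        rw [LinearMap.mem_ker, hφx, hc 0, hc 1, hc 2]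
        ring
      rw [hY, finrank_top] at h2
      rw [hX3] at h2
      exact absurd h2 (by norm_num)
    obtain ⟨j0, hj0⟩ := hfex
    set v : XR3 := (f j0)⁻¹ • EE j0 with hvdef
    have hφv : φ v = 1 := by
      rw [hvdef, map_smul, smul_eq_mul, hfj, inv_mul_cancel₀ hj0]
    set πL : XR3 →ₗ[ℝ] XR3 := LinearMap.id - φ.smulRight v with hπdef
    have hπapp : ∀ x : XR3, πL x = x - φ x • v := fun x => rfl
    have hπmem : ∀ x : XR3, πL x ∈ Y := by
      intro x
      apply hmem
      rw [hπapp, map_sub, map_smul, smul_eq_mul, hφv, mul_one, sub_self]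
    have hπy : ∀ y : Y, πL (y : XR3) = (y : XR3) := by
      intro y
      rw [hπapp, hmem' _ y.2, zero_smul, sub_zero]
    set cY : Fin 3 → Y := fun j => T ⟨πL (EE j), hπmem _⟩ with hcY
    set cx : Fin 3 → XR3 := fun j => (cY j : XR3) with hcx
    have hcomb : ∀ y : Y,
        ((y : XR3) 0) • cx 0 + ((y : XR3) 1) • cx 1 + ((y : XR3) 2) • cx 2 = ((T y : XR3)) := by
      intro y
      have hin : ((y : XR3) 0) • (⟨πL (EE 0), hπmem _⟩ : Y) + ((y : XR3) 1) • ⟨πL (EE 1), hπmem _⟩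
          + ((y : XR3) 2) • ⟨πL (EE 2), hπmem _⟩ = y := by
        apply Subtype.ext
        push_cast
        rw [← map_smul, ← map_smul, ← map_smul, ← map_add, ← map_add, ← hxsum (y : XR3)]
        exact hπy y
      conv_rhs => rw [← hin]
      rw [map_add, map_add, map_smul, map_smul, map_smul]
      push_cast
      rfl
    have hM0 : (0:ℝ) ≤ ‖T‖ := norm_nonneg T
    have hTle : ∀ y : Y, ‖(T y : XR3)‖ ≤ ‖T‖ * ‖(y : XR3)‖ := fun y => T.le_opNorm y
    have master : ∀ i j : Fin 3, ‖f j • cx i - f i • cx j‖ ≤ ‖T‖ * (|f i| + |f j|) := by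
      intro i j
      rcases eq_or_ne i j with rfl | hij
      · simp only [sub_self, norm_zero]
        positivity
      · set yX : XR3 := f j • EE i - f i • EE j with hyx
        have hyY : yX ∈ Y := by
          apply hmem
          rw [hyx, map_sub, map_smul, map_smul, smul_eq_mul, smul_eq_mul, hfj, hfj]
          ring
        have hyc : f j • cx i - f i • cx j = ((T ⟨yX, hyY⟩ : Y) : XR3) := by
          rw [← hcomb ⟨yX, hyY⟩]
          have hcoord : ∀ k : Fin 3, ((⟨yX, hyY⟩ : Y) : XR3) k
              = f j * (EE i k) - f i * (EE j k) := fun k => rfl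
          rw [hcoord 0, hcoord 1, hcoord 2]
          exact (combo_eq cx i j (f j) (f i)).symm
        rw [hyc]
        calc ‖((T ⟨yX, hyY⟩ : Y) : XR3)‖ ≤ ‖T‖ * ‖yX‖ := hTle _
          _ ≤ ‖T‖ * (|f i| + |f j|) := by
            apply mul_le_mul_of_nonneg_left _ hM0
            calc ‖yX‖ ≤ ‖f j • EE i‖ + ‖f i • EE j‖ := norm_sub_le _ _
              _ = |f j| * 1 + |f i| * 1 := by
                  rw [norm_smul, norm_smul, normE, normE, Real.norm_eq_abs, Real.norm_eq_abs]
              _ = |f i| + |f j| := by ring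
    set g : Fin 3 → Fin 3 := fun i => if f i = 0 then j0 else i with hg
    have hgne : ∀ i, f (g i) ≠ 0 := by
      intro i
      rw [hg]
      dsimp only
      split_ifs with h
      · exact hj0
      · exact h
    set b : Fin 3 → XR3 := fun i => (-(f (g i))⁻¹) • cx (g i) with hb
    set R : Fin 3 → ℝ := fun i => ‖T‖ / |f (g i)| with hR
    have hR0 : ∀ i, 0 ≤ R i := by
      intro i
      rw [hR]
      positivity
    have hpair : ∀ i j, ‖b i - b j‖ ≤ R i + R j := by
      intro i j
      have hgi : (0:ℝ) < |f (g i)| := abs_pos.mpr (hgne i)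
      have hgj : (0:ℝ) < |f (g j)| := abs_pos.mpr (hgne j)
      have hfgi : f (g i) ≠ 0 := hgne i
      have hfgj : f (g j) ≠ 0 := hgne j
      have e1 : (-(f (g i) * f (g j))⁻¹) * f (g j) = -(f (g i))⁻¹ := by
        rw [mul_inv, neg_mul, mul_assoc, inv_mul_cancel₀ hfgj, mul_one]
      have e2 : (-(f (g i) * f (g j))⁻¹) * f (g i) = -(f (g j))⁻¹ := by
        rw [mul_inv, neg_mul, mul_comm ((f (g i))⁻¹) ((f (g j))⁻¹), mul_assoc,
          inv_mul_cancel₀ hfgi, mul_one]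
      have h1 : b i - b j
          = (-(f (g i) * f (g j))⁻¹) • (f (g j) • cx (g i) - f (g i) • cx (g j)) := by
        rw [hb]
        dsimp only
        rw [smul_sub, smul_smul, smul_smul, e1, e2]
      rw [h1, norm_smul, Real.norm_eq_abs, abs_neg, abs_inv, abs_mul]
      calc (|f (g i)| * |f (g j)|)⁻¹ * ‖f (g j) • cx (g i) - f (g i) • cx (g j)‖
          ≤ (|f (g i)| * |f (g j)|)⁻¹ * (‖T‖ * (|f (g i)| + |f (g j)|)) := by
            apply mul_le_mul_of_nonneg_left (master (g i) (g j))
            positivity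
        _ = R i + R j := by
            rw [hR]
            field_simp
            ring
    have hp01 := hpair 0 1
    have hp02 := hpair 0 2
    have hp12 := hpair 1 2
    rw [norm_eqX] at hp01 hp02 hp12
    simp only [PiLp.sub_apply] at hp01 hp02 hp12
    obtain ⟨z0, z1, z2, hz0, hz1, hz2⟩ :=
      helly (b 0 0) (b 0 1) (b 0 2) (b 1 0) (b 1 1) (b 1 2) (b 2 0) (b 2 1) (b 2 2)
        (R 0) (R 1) (R 2) (hR0 0) (hR0 1) (hR0 2) hp01 hp02 hp12
    set z : XR3 := WithLp.toLp 1 ![z0, z1, z2] with hzdef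
    have hzb : ∀ i, ‖z - b i‖ ≤ R i := by
      intro i
      fin_cases i <;> rw [norm_eqX] <;>
        simp only [PiLp.sub_apply, hzdef, PiLp.toLp_apply, Matrix.cons_val_zero, Matrix.cons_val_one,
          Matrix.head_cons, Matrix.cons_val_two, Matrix.tail_cons]
      · exact hz0
      · exact hz1
      · exact hz2
    set scol : Fin 3 → XR3 := fun j => cx j + f j • z with hscol
    have hcolnorm : ∀ j, ‖scol j‖ ≤ ‖T‖ := by
      intro j
      rw [hscol]
      dsimp only
      by_cases hfj0 : f j = 0
      · rw [hfj0, zero_smul, add_zero]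
        have hπE : πL (EE j) = EE j := by
          rw [hπapp, hfj, hfj0, zero_smul, sub_zero]
        have : cx j = ((T ⟨EE j, by rw [← hπE]; exact hπmem _⟩ : Y) : XR3) := by
          rw [hcx]
          dsimp only
          rw [hcY]
          dsimp only
          congr 2
          exact Subtype.ext hπE
        rw [this]
        calc ‖((T ⟨EE j, _⟩ : Y) : XR3)‖ ≤ ‖T‖ * ‖EE j‖ := hTle _
          _ = ‖T‖ := by rw [normE, mul_one]
      · have hgj : g j = j := by rw [hg]; simp [hfj0]
        have hfb : f j • b j = -(cx j) := by
          rw [hb]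
          dsimp only
          rw [hgj, smul_smul, mul_neg, mul_inv_cancel₀ hfj0, neg_one_smul]
        have h1 : cx j + f j • z = f j • (z - b j) := by
          rw [smul_sub, hfb]
          abel
        rw [h1, norm_smul, Real.norm_eq_abs]
        have := hzb j
        have hRj : R j = ‖T‖ / |f j| := by simp only [hR]; rw [hgj]
        calc |f j| * ‖z - b j‖ ≤ |f j| * (‖T‖ / |f j|) := by
              apply mul_le_mul_of_nonneg_left _ (abs_nonneg _)
              rw [← hRj]
              exact hzb j
          _ = ‖T‖ := by
              rw [mul_div_cancel₀]
              exact abs_ne_zero.mpr hfj0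
    refine ⟨mkS scol, ?_, mkS_norm_le _ _ hM0 hcolnorm⟩
    intro y
    rw [mkS_apply]
    have e1 : (y : XR3) 0 • scol 0 + (y : XR3) 1 • scol 1 + (y : XR3) 2 • scol 2
        = ((y : XR3) 0 • cx 0 + (y : XR3) 1 • cx 1 + (y : XR3) 2 • cx 2) + φ (y : XR3) • z := by
      rw [hφx, hscol]
      dsimp only
      rw [smul_add, smul_add, smul_add, smul_smul, smul_smul, smul_smul, add_smul, add_smul]
      abel
    rw [e1, hmem' _ y.2, zero_smul, add_zero, hcomb y]
  -- dimension 3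
  · have hY : Y = ⊤ := Submodule.eq_top_of_finrank_eq (by rw [h3, hX3])
    subst hY
    set e : XR3 →ₗ[ℝ] (⊤ : Submodule ℝ XR3) := (Submodule.topEquiv (R := ℝ) (M := XR3)).symm.toLinearMap with he
    refine ⟨(⊤ : Submodule ℝ XR3).subtypeL.comp
      (T.comp (LinearMap.toContinuousLinearMap e)), fun y => ?_, ?_⟩
    · show ((T (e (y : XR3)) : XR3)) = ((T y : XR3))
      have he2 : e (y : XR3) = y := Subtype.ext rfl
      rw [he2]
    · apply ContinuousLinearMap.opNorm_le_bound _ (norm_nonneg T)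
      intro x
      show ‖((T (e x) : XR3))‖ ≤ ‖T‖ * ‖x‖
      calc ‖((T (e x) : XR3))‖ = ‖T (e x)‖ := rfl
        _ ≤ ‖T‖ * ‖e x‖ := T.le_opNorm _
        _ = ‖T‖ * ‖x‖ := rfl
end

section
/- In X = ℝ⁴ with the ℓ¹-norm, let Y = {x ∈ ℝ⁴ : x 1 + x 2 + x 3 + x 4 = 0}, which has basis u₂, u₃, u₄ where u_k = e₁ − e_k, and let T : Y → Y be the linear operator determined by T u₂ = ½(u₂ + u₃ − u₄), T u₃ = ½(u₂ − u₃ + u₄), T u₄ = ½(u₂ − u₃ − u₄). Then ‖T‖ = 1, and every linear operator S : ℝ⁴₁ → ℝ⁴₁ with S y = T y for all y ∈ Y satisfies ‖S‖ ≥ 5/4. In particular, ℝ⁴ with the ℓ¹-norm does not have the self-extension property. -/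
noncomputable section

/-- `ℝ⁴` with the `ℓ¹`-norm. -/
abbrev X4 : Type := PiLp 1 fun _ : Fin 4 => ℝ

/-- The standard basis vectors `e₁, e₂, e₃, e₄` of `ℝ⁴₁` (indexed by `Fin 4`). -/
def e4 (i : Fin 4) : X4 := (WithLp.equiv 1 (Fin 4 → ℝ)).symm (Pi.single i 1)

/-- `u_k = e₁ - e_k` (indexed by `Fin 4`, so `u4 1, u4 2, u4 3` are `u₂, u₃, u₄`). -/
def u4 (k : Fin 4) : X4 := e4 0 - e4 k

/-- The hyperplane `Y = {x ∈ ℝ⁴ : x 1 + x 2 + x 3 + x 4 = 0}`. -/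
def Y4 : Submodule ℝ X4 :=
  LinearMap.ker ((∑ i : Fin 4, LinearMap.proj i) ∘ₗ
    (WithLp.linearEquiv 1 ℝ (Fin 4 → ℝ)).toLinearMap)

lemma u4_mem (k : Fin 4) : u4 k ∈ Y4 := by
  simp [Y4, u4, e4, LinearMap.mem_ker, LinearMap.sum_apply, Finset.sum_sub_distrib,
    Finset.sum_pi_single]

lemma norm_X4 (x : X4) : ‖x‖ = |x 0| + |x 1| + |x 2| + |x 3| := by
  rw [PiLp.norm_eq_sum (by norm_num : 0 < (1:ENNReal).toReal)]
  simp [Fin.sum_univ_four, Real.norm_eq_abs, Real.rpow_one]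

lemma mem_Y4 (x : X4) : x ∈ Y4 ↔ x 0 + x 1 + x 2 + x 3 = 0 := by
  simp [Y4, LinearMap.mem_ker, Fin.sum_univ_four]

example : e4 1 2 = 0 := by simp [e4]
example : e4 1 1 = 1 := by simp [e4]

lemma abs_ineq1 (t : ℝ) : (3:ℝ)/2 ≤ |t| + |t - 1/2| + |t - 1/2| + |t + 1/2| := by
  rcases abs_cases t with ⟨h1,_⟩|⟨h1,_⟩ <;> rcases abs_cases (t-1/2) with ⟨h2,_⟩|⟨h2,_⟩ <;>
    rcases abs_cases (t+1/2) with ⟨h3,_⟩|⟨h3,_⟩ <;> linarith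

lemma abs_ineq2 (t : ℝ) : (1:ℝ)/2 ≤ |t| + |t + 1/2| + |t + 1/2| + |t + 1/2| := by
  rcases abs_cases t with ⟨h1,_⟩|⟨h1,_⟩ <;> rcases abs_cases (t+1/2) with ⟨h3,_⟩|⟨h3,_⟩ <;> linarith

lemma key_ineq (p q r : ℝ) :
    |(-p) - q + r| + |p + q + r| + |p - q - r| + |(-p) + q - r| ≤
      2 * (|p + q + r| + |p| + |q| + |r|) := by
  have h1 := le_abs_self p; have h2 := neg_abs_le p
  have h3 := le_abs_self q; have h4 := neg_abs_le q
  have h5 := le_abs_self r; have h6 := neg_abs_le r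
  have h7 := le_abs_self (p+q+r); have h8 := neg_abs_le (p+q+r)
  rcases abs_cases ((-p) - q + r) with ⟨e1,_⟩|⟨e1,_⟩ <;>
    rcases abs_cases (p - q - r) with ⟨e2,_⟩|⟨e2,_⟩ <;>
    rcases abs_cases ((-p) + q - r) with ⟨e3,_⟩|⟨e3,_⟩ <;> linarith

lemma decomp (x : X4) (hx : x ∈ Y4) :
    x = (-(x 1)) • u4 1 + (-(x 2)) • u4 2 + (-(x 3)) • u4 3 := by
  rw [mem_Y4] at hx
  ext i
  fin_cases i <;>
    simp [u4, e4, WithLp.equiv_symm_apply, PiLp.sub_apply, PiLp.add_apply, PiLp.smul_apply, Pi.single_apply] <;> linarith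

lemma Ty_coe (T : Y4 →L[ℝ] Y4)
    (h1 : (T ⟨u4 1, u4_mem 1⟩ : X4) = (1 / 2 : ℝ) • (u4 1 + u4 2 - u4 3))
    (h2 : (T ⟨u4 2, u4_mem 2⟩ : X4) = (1 / 2 : ℝ) • (u4 1 - u4 2 + u4 3))
    (h3 : (T ⟨u4 3, u4_mem 3⟩ : X4) = (1 / 2 : ℝ) • (u4 1 - u4 2 - u4 3))
    (x : X4) (hx : x ∈ Y4) :
    (T ⟨x, hx⟩ : X4) = (-(x 1)) • ((1 / 2 : ℝ) • (u4 1 + u4 2 - u4 3))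
      + (-(x 2)) • ((1 / 2 : ℝ) • (u4 1 - u4 2 + u4 3))
      + (-(x 3)) • ((1 / 2 : ℝ) • (u4 1 - u4 2 - u4 3)) := by
  have hdec : (⟨x, hx⟩ : Y4) = (-(x 1)) • ⟨u4 1, u4_mem 1⟩ + (-(x 2)) • ⟨u4 2, u4_mem 2⟩
      + (-(x 3)) • ⟨u4 3, u4_mem 3⟩ := by
    apply Subtype.ext
    push_cast
    exact decomp x hx
  rw [hdec, map_add, map_add, map_smul, map_smul, map_smul]
  push_cast
  rw [h1, h2, h3]

lemma Ty_apply (T : Y4 →L[ℝ] Y4)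
    (h1 : (T ⟨u4 1, u4_mem 1⟩ : X4) = (1 / 2 : ℝ) • (u4 1 + u4 2 - u4 3))
    (h2 : (T ⟨u4 2, u4_mem 2⟩ : X4) = (1 / 2 : ℝ) • (u4 1 - u4 2 + u4 3))
    (h3 : (T ⟨u4 3, u4_mem 3⟩ : X4) = (1 / 2 : ℝ) • (u4 1 - u4 2 - u4 3))
    (x : X4) (hx : x ∈ Y4) (i : Fin 4) :
    (T ⟨x, hx⟩ : X4) i = ![(-(x 1) - x 2 + x 3)/2, (x 1 + x 2 + x 3)/2,
      (x 1 - x 2 - x 3)/2, (-(x 1) + x 2 - x 3)/2] i := by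
  rw [Ty_coe T h1 h2 h3 x hx]
  fin_cases i <;>
    · simp [u4, e4, WithLp.equiv_symm_apply, PiLp.sub_apply, PiLp.add_apply,
        PiLp.smul_apply, Pi.single_apply]
      ring

lemma norm_T_le (T : Y4 →L[ℝ] Y4)
    (h1 : (T ⟨u4 1, u4_mem 1⟩ : X4) = (1 / 2 : ℝ) • (u4 1 + u4 2 - u4 3))
    (h2 : (T ⟨u4 2, u4_mem 2⟩ : X4) = (1 / 2 : ℝ) • (u4 1 - u4 2 + u4 3))
    (h3 : (T ⟨u4 3, u4_mem 3⟩ : X4) = (1 / 2 : ℝ) • (u4 1 - u4 2 - u4 3))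
    (y : Y4) : ‖T y‖ ≤ 1 * ‖y‖ := by
  obtain ⟨x, hx⟩ := y
  have hm := (mem_Y4 x).1 hx
  have h0 : x 0 = -(x 1 + x 2 + x 3) := by linarith
  have hTn : ‖T ⟨x, hx⟩‖ = ‖(T ⟨x, hx⟩ : X4)‖ := rfl
  have hyn : ‖(⟨x, hx⟩ : Y4)‖ = ‖x‖ := rfl
  rw [one_mul, hTn, hyn, norm_X4, norm_X4 x, Ty_apply T h1 h2 h3 x hx,
    Ty_apply T h1 h2 h3 x hx, Ty_apply T h1 h2 h3 x hx, Ty_apply T h1 h2 h3 x hx]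
  simp only [Matrix.cons_val_zero, Matrix.cons_val_one, Matrix.head_cons,
    Matrix.cons_val_two, Matrix.tail_cons, Matrix.cons_val_three]
  rw [h0, abs_neg, abs_div, abs_div, abs_div, abs_div, abs_two]
  have := key_ineq (x 1) (x 2) (x 3)
  linarith

lemma norm_u41 : ‖u4 1‖ = 2 := by
  rw [norm_X4]
  simp [u4, e4, WithLp.equiv_symm_apply, PiLp.sub_apply, Pi.single_apply]
  norm_num

lemma norm_T_eq (T : Y4 →L[ℝ] Y4)
    (h1 : (T ⟨u4 1, u4_mem 1⟩ : X4) = (1 / 2 : ℝ) • (u4 1 + u4 2 - u4 3))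
    (h2 : (T ⟨u4 2, u4_mem 2⟩ : X4) = (1 / 2 : ℝ) • (u4 1 - u4 2 + u4 3))
    (h3 : (T ⟨u4 3, u4_mem 3⟩ : X4) = (1 / 2 : ℝ) • (u4 1 - u4 2 - u4 3)) :
    ‖T‖ = 1 := by
  apply le_antisymm
  · exact T.opNorm_le_bound zero_le_one (norm_T_le T h1 h2 h3)
  · have hle := T.le_opNorm ⟨u4 1, u4_mem 1⟩
    have hn : ‖T ⟨u4 1, u4_mem 1⟩‖ = ‖(T ⟨u4 1, u4_mem 1⟩ : X4)‖ := rfl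
    have hnu : ‖(⟨u4 1, u4_mem 1⟩ : Y4)‖ = ‖u4 1‖ := rfl
    rw [hn, h1, hnu, norm_u41] at hle
    have h2' : ‖(1 / 2 : ℝ) • (u4 1 + u4 2 - u4 3)‖ = 2 := by
      rw [norm_X4]
      simp [u4, e4, WithLp.equiv_symm_apply, PiLp.sub_apply, PiLp.add_apply,
        PiLp.smul_apply, Pi.single_apply]
      norm_num
    rw [h2'] at hle
    linarith

lemma norm_e4 (i : Fin 4) : ‖e4 i‖ = 1 := by
  rw [norm_X4]
  fin_cases i <;> simp [e4, WithLp.equiv_symm_apply, Pi.single_apply]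

lemma w_apply :
    (∀ i, ((1/2:ℝ) • (u4 1 + u4 2 - u4 3)) i = ![1/2, -1/2, -1/2, 1/2] i) ∧
    (∀ i, ((1/2:ℝ) • (u4 1 - u4 2 + u4 3)) i = ![1/2, -1/2, 1/2, -1/2] i) ∧
    (∀ i, ((1/2:ℝ) • (u4 1 - u4 2 - u4 3)) i = ![-1/2, -1/2, 1/2, 1/2] i) := by
  refine ⟨fun i => ?_, fun i => ?_, fun i => ?_⟩ <;> fin_cases i <;>
    norm_num [u4, e4, WithLp.equiv_symm_apply, PiLp.sub_apply, PiLp.add_apply,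
      PiLp.smul_apply, Pi.single_apply, Fin.ext_iff, show ((3:Fin 4):ℕ) = 3 from rfl]

lemma ext_lower (T : Y4 →L[ℝ] Y4)
    (h1 : (T ⟨u4 1, u4_mem 1⟩ : X4) = (1 / 2 : ℝ) • (u4 1 + u4 2 - u4 3))
    (h2 : (T ⟨u4 2, u4_mem 2⟩ : X4) = (1 / 2 : ℝ) • (u4 1 - u4 2 + u4 3))
    (h3 : (T ⟨u4 3, u4_mem 3⟩ : X4) = (1 / 2 : ℝ) • (u4 1 - u4 2 - u4 3))
    (S : X4 →L[ℝ] X4) (hS : ∀ y : Y4, S y = (T y : X4)) : 5 / 4 ≤ ‖S‖ := by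
  set v : X4 := S (e4 0) with hv
  have hSu : ∀ k : Fin 4, S (u4 k) = (T ⟨u4 k, u4_mem k⟩ : X4) := fun k => hS ⟨u4 k, u4_mem k⟩
  have hk : ∀ k : Fin 4, S (e4 k) = v - S (u4 k) := by
    intro k
    have : e4 k = e4 0 - u4 k := by simp [u4]
    rw [this, map_sub]
  have hb : ∀ i : Fin 4, ‖S (e4 i)‖ ≤ ‖S‖ := by
    intro i
    calc ‖S (e4 i)‖ ≤ ‖S‖ * ‖e4 i‖ := S.le_opNorm _
    _ = ‖S‖ := by rw [norm_e4, mul_one]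
  have key : (5:ℝ) ≤ ‖S (e4 0)‖ + ‖S (e4 1)‖ + ‖S (e4 2)‖ + ‖S (e4 3)‖ := by
    rw [hk 1, hk 2, hk 3, hSu 1, hSu 2, hSu 3, h1, h2, h3, ← hv]
    rw [norm_X4, norm_X4, norm_X4, norm_X4]
    simp only [PiLp.sub_apply, w_apply.1, w_apply.2.1, w_apply.2.2,
      Matrix.cons_val_zero, Matrix.cons_val_one, Matrix.head_cons,
      Matrix.cons_val_two, Matrix.tail_cons, Matrix.cons_val_three]
    have e1 := abs_ineq1 (v 0); have e2 := abs_ineq2 (v 1)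
    have e3 := abs_ineq1 (v 2); have e4 := abs_ineq1 (v 3)
    simp only [show ∀ t : ℝ, t - -1 / 2 = t + 1 / 2 from fun t => by ring]
    linarith [abs_ineq1 (v 0), abs_ineq2 (v 1), abs_ineq1 (v 2), abs_ineq1 (v 3)]
  have := hb 0; have := hb 1; have := hb 2; have := hb 3
  linarith

def M4 : Matrix (Fin 4) (Fin 4) ℝ :=
  !![0, -1/2, -1/2, 1/2; 0, 1/2, 1/2, 1/2; 0, 1/2, -1/2, -1/2; 0, -1/2, 1/2, -1/2]

def Lmap : X4 →ₗ[ℝ] X4 :=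
  (WithLp.linearEquiv 1 ℝ (Fin 4 → ℝ)).symm.toLinearMap ∘ₗ Matrix.toLin' M4 ∘ₗ
    (WithLp.linearEquiv 1 ℝ (Fin 4 → ℝ)).toLinearMap

lemma Lmap_mem (x : X4) : Lmap x ∈ Y4 := by
  rw [mem_Y4]
  simp [Lmap, M4, Matrix.toLin'_apply, Matrix.mulVec, dotProduct,
    Fin.sum_univ_four, WithLp.linearEquiv]
  ring

def T0 : Y4 →L[ℝ] Y4 :=
  LinearMap.toContinuousLinearMap (Lmap.restrict (fun x _ => Lmap_mem x))

lemma T0_vals :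
    (T0 ⟨u4 1, u4_mem 1⟩ : X4) = (1 / 2 : ℝ) • (u4 1 + u4 2 - u4 3) ∧
    (T0 ⟨u4 2, u4_mem 2⟩ : X4) = (1 / 2 : ℝ) • (u4 1 - u4 2 + u4 3) ∧
    (T0 ⟨u4 3, u4_mem 3⟩ : X4) = (1 / 2 : ℝ) • (u4 1 - u4 2 - u4 3) := by
  refine ⟨?_, ?_, ?_⟩ <;>
    · show Lmap _ = _
      ext i
      fin_cases i <;>
        norm_num [Lmap, M4, Matrix.toLin'_apply, Matrix.mulVec, dotProduct,
          Fin.sum_univ_four, WithLp.linearEquiv, u4, e4, WithLp.equiv_symm_apply,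
          PiLp.sub_apply, PiLp.add_apply, PiLp.smul_apply, Pi.single_apply,
          show ((3:Fin 4):ℕ) = 3 from rfl] <;> simp [Fin.ext_iff] <;> norm_num

/-- A real Banach space `X` has the **self-extension property** if every continuous linear
operator on a closed subspace of `X` extends to an operator on `X` with the same norm. -/
def SelfExt (X : Type*) [NormedAddCommGroup X] [NormedSpace ℝ X] : Prop :=
  ∀ (Y : Submodule ℝ X), IsClosed (Y : Set X) → ∀ T : Y →L[ℝ] Y,
    ∃ S : X →L[ℝ] X, (∀ y : Y, S y = (T y : X)) ∧ ‖S‖ = ‖T‖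

/-- The operator `T : Y → Y` given by `T u₂ = ½(u₂ + u₃ − u₄)`, `T u₃ = ½(u₂ − u₃ + u₄)`,
`T u₄ = ½(u₂ − u₃ − u₄)` has norm one, and every linear extension `S : ℝ⁴₁ → ℝ⁴₁` of `T`
satisfies `‖S‖ ≥ 5/4`. In particular `ℝ⁴₁` fails the self-extension property. -/
theorem R4_l1_fails_selfExt :
    (∀ T : Y4 →L[ℝ] Y4,
      (T ⟨u4 1, u4_mem 1⟩ : X4) = (1 / 2 : ℝ) • (u4 1 + u4 2 - u4 3) →
      (T ⟨u4 2, u4_mem 2⟩ : X4) = (1 / 2 : ℝ) • (u4 1 - u4 2 + u4 3) →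
      (T ⟨u4 3, u4_mem 3⟩ : X4) = (1 / 2 : ℝ) • (u4 1 - u4 2 - u4 3) →
        ‖T‖ = 1 ∧
        ∀ S : X4 →L[ℝ] X4, (∀ y : Y4, S y = (T y : X4)) → 5 / 4 ≤ ‖S‖) ∧
    ¬ SelfExt X4 := by
  constructor
  · intro T h1 h2 h3
    exact ⟨norm_T_eq T h1 h2 h3, fun S hS => ext_lower T h1 h2 h3 S hS⟩
  · intro h
    obtain ⟨S, hS, hnorm⟩ := h Y4 (Submodule.closed_of_finiteDimensional Y4) T0
    have h1 := T0_vals.1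
    have h2 := T0_vals.2.1
    have h3 := T0_vals.2.2
    have hge := ext_lower T0 h1 h2 h3 S hS
    rw [hnorm, norm_T_eq T0 h1 h2 h3] at hge
    norm_num at hge


end
end
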